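/- arXiv:math/0403337 — 3 statements merged into one kernel-verified Lean document; each statement's English description precedes it below -/
import Mathlib

section
/- Let M be a lattice path matroid of rank r. For every k with 0 ≤ k ≤ r − 1, M has at most k + 1 nontrivial connected flats of rank r − k. In particular, M has at most two connected hyperplanes (connected flats of rank r − 1) and at most r − 1 connected lines (nontrivial connected flats of rank 2). -/
open Set
open scoped Matroid

namespace LPM

variable {α β : Type*}

/-- `I` is a partial transversal of the set family `N`: there is an injection
matching each element of `I` to an index of a member of the family containing it. -/
def IsPT {ι : Type*} (N : ι → Set α) (I : Set α) : Prop :=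
  ∃ f : I → ι, Function.Injective f ∧ ∀ x : I, (x : α) ∈ N (f x)

/-- `I` is a (full) transversal of the set family `N`: there is a bijection
matching each element of `I` to an index of a member of the family containing it. -/
def IsT {ι : Type*} (N : ι → Set α) (I : Set α) : Prop :=
  ∃ f : I → ι, Function.Bijective f ∧ ∀ x : I, (x : α) ∈ N (f x)

/-- A lattice path presentation with nullity `m` and rank `r`: a sequence of
intervals `[l i, g i] ⊆ {1, …, m + r}` whose left endpoints strictly increase
and whose right endpoints strictly increase. -/
structure LPP (m r : ℕ) where
  l : Fin r → ℕ
  g : Fin r → ℕ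
  l_strictMono : StrictMono l
  g_strictMono : StrictMono g
  one_le_l : ∀ i, 1 ≤ l i
  l_le_g : ∀ i, l i ≤ g i
  g_le : ∀ i, g i ≤ m + r

/-- The intervals of a lattice path presentation. -/
def LPP.N {m r : ℕ} (P : LPP m r) (i : Fin r) : Set ℕ := Set.Icc (P.l i) (P.g i)

/-- `M` is the lattice path matroid `M[N]` of the presentation `P`: the ground set
is `{1, …, m + r}` and the independent sets are exactly the partial transversals
of the intervals of `P`. -/
def IsLPMOf {m r : ℕ} (P : LPP m r) (M : Matroid ℕ) : Prop :=
  M.E = Set.Icc 1 (m + r) ∧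
    ∀ I : Set ℕ, M.Indep I ↔ I ⊆ Set.Icc 1 (m + r) ∧ IsPT P.N I

/-- `M` is isomorphic to `M'`: there is a bijection between the ground sets
carrying independent sets to independent sets in both directions. -/
def IsoTo (M : Matroid α) (M' : Matroid β) : Prop :=
  ∃ f : α → β, Set.BijOn f M.E M'.E ∧ ∀ I ⊆ M.E, (M.Indep I ↔ M'.Indep (f '' I))

/-- A lattice path matroid: a matroid isomorphic to `M[N]` for some lattice path
presentation (presentations with `r = 0` give the rank-zero matroids). -/
def IsLPMatroid (M : Matroid α) : Prop :=
  ∃ (m r : ℕ) (P : LPP m r) (M₀ : Matroid ℕ), IsLPMOf P M₀ ∧ IsoTo M M₀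

/-- A circuit of a matroid: a minimal dependent subset of the ground set. -/
def Circuit (M : Matroid α) (C : Set α) : Prop :=
  C ⊆ M.E ∧ ¬ M.Indep C ∧ ∀ D : Set α, D ⊂ C → M.Indep D

/-- A matroid is connected if every two distinct elements of the ground set lie
in a common circuit. -/
def Connected (M : Matroid α) : Prop :=
  ∀ x ∈ M.E, ∀ y ∈ M.E, x ≠ y → ∃ C, Circuit M C ∧ x ∈ C ∧ y ∈ C

/-- The rank of a set in a matroid: the supremum of the cardinalities of its
independent subsets. -/
noncomputable def rk (M : Matroid α) (X : Set α) : ℕ :=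
  sSup {n | ∃ I, I ⊆ X ∧ M.Indep I ∧ I.ncard = n}

/-- A nontrivial connected flat: a flat that is dependent and whose restriction
is a connected matroid. -/
def NTConnFlat (M : Matroid α) (X : Set α) : Prop :=
  M.IsFlat X ∧ ¬ M.Indep X ∧ Connected (M ↾ X)

/-- Deletion of a set from a matroid. -/
def delete (M : Matroid α) (D : Set α) : Matroid α := M ↾ (M.E \ D)

/-- Contraction of a set in a matroid, defined via duality. -/
def contract (M : Matroid α) (C : Set α) : Matroid α := (delete M✶ C)✶

/-- `Minor M' M` means that `M'` is obtained from `M` by a sequence of deletions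
and contractions. -/
inductive Minor : Matroid α → Matroid α → Prop
  | refl (M : Matroid α) : Minor M M
  | del {M' M : Matroid α} (D : Set α) (h : Minor M' M) : Minor (delete M' D) M
  | con {M' M : Matroid α} (C : Set α) (h : Minor M' M) : Minor (contract M' C) M

end LPM

-- ===== auxiliary development =====

namespace LPMAux

open LPM

variable {m r : ℕ}

/-- The number of intervals of `P` meeting the window `[a,b]`. -/
def hw (P : LPP m r) (a b : ℕ) : ℕ :=
  (Finset.univ.filter (fun i : Fin r => a ≤ P.g i ∧ P.l i ≤ b)).card

lemma hw_mono (P : LPP m r) {a b a' b' : ℕ} (ha : a' ≤ a) (hb : b ≤ b') :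
    hw P a b ≤ hw P a' b' := by
  apply Finset.card_le_card
  intro i hi
  simp only [Finset.mem_filter, Finset.mem_univ, true_and] at hi ⊢
  exact ⟨le_trans ha hi.1, le_trans hi.2 hb⟩

lemma isPT_finite {I : Set ℕ} (h : IsPT (LPP.N (m := m) (r := r) P) I) : I.Finite := by
  obtain ⟨f, hinj, -⟩ := h
  have : Finite I := Finite.of_injective f hinj
  exact Set.finite_coe_iff.mp this

/-- Easy direction: a partial transversal meets every window in at most
`hw` elements. -/
lemma window_of_isPT {P : LPP m r} {I : Set ℕ} (h : IsPT P.N I) (a b : ℕ) :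
    (I ∩ Set.Icc a b).ncard ≤ hw P a b := by
  classical
  obtain ⟨f, hinj, hmem⟩ := h
  have hcard : (I ∩ Set.Icc a b).ncard = Nat.card (I ∩ Set.Icc a b : Set ℕ) :=
    (Nat.card_coe_set_eq _).symm
  rw [hcard]
  have : hw P a b = Nat.card {i : Fin r // a ≤ P.g i ∧ P.l i ≤ b} := by
    rw [Nat.card_eq_fintype_card, Fintype.card_subtype]
    rfl
  rw [this]
  apply Nat.card_le_card_of_injective
    (f := fun x : (I ∩ Set.Icc a b : Set ℕ) =>
      (⟨f ⟨x.1, x.2.1⟩, by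
        have hm := hmem ⟨x.1, x.2.1⟩
        simp only [LPP.N, Set.mem_Icc] at hm
        exact ⟨le_trans x.2.2.1 hm.2, le_trans hm.1 x.2.2.2⟩⟩ :
        {i : Fin r // a ≤ P.g i ∧ P.l i ≤ b}))
  intro x y hxy
  simp only [Subtype.mk.injEq] at hxy
  exact Subtype.ext (Subtype.mk_eq_mk.mp (hinj hxy))


/-- Hard direction: the window condition implies being a partial transversal. -/
lemma isPT_of_window {P : LPP m r} {I : Set ℕ} (hIfin : I.Finite)
    (hcond : ∀ a b, (I ∩ Set.Icc a b).ncard ≤ hw P a b) : IsPT P.N I := by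
  classical
  set t : ℕ → Finset (Fin r) :=
    fun x => Finset.univ.filter (fun i : Fin r => P.l i ≤ x ∧ x ≤ P.g i) with ht
  have key : ∀ c (s : Finset ℕ), s.card = c → ↑s ⊆ I →
      s.card ≤ (s.biUnion t).card := by
    intro c
    induction c using Nat.strong_induction_on with
    | _ c IH =>
      intro s hcard hsI
      rcases s.eq_empty_or_nonempty with rfl | hne
      · simp
      set A := s.min' hne with hA
      set B := s.max' hne with hB
      by_cases hcase : ∀ i : Fin r, (A ≤ P.g i ∧ P.l i ≤ B) → ∃ x ∈ s, x ∈ P.N i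
      · -- every interval meeting the window meets s
        have hsub : (↑s : Set ℕ) ⊆ I ∩ Set.Icc A B := by
          intro x hx
          exact ⟨hsI hx, s.min'_le x hx, s.le_max' x hx⟩
        have h1 : s.card ≤ hw P A B := by
          have := Set.ncard_le_ncard hsub (hIfin.inter_of_left _)
          rw [Set.ncard_coe_finset] at this
          exact this.trans (hcond A B)
        refine h1.trans (Finset.card_le_card ?_)
        intro i hi
        simp only [Finset.mem_filter, Finset.mem_univ, true_and, hw] at hi
        obtain ⟨x, hxs, hxN⟩ := hcase i hi
        refine Finset.mem_biUnion.mpr ⟨x, hxs, ?_⟩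
        simp only [ht, Finset.mem_filter, Finset.mem_univ, true_and]
        exact ⟨hxN.1, hxN.2⟩
      · push_neg at hcase
        obtain ⟨i₀, hi₀w, hi₀s⟩ := hcase
        have hAmem : A ∈ s := s.min'_mem hne
        have hBmem : B ∈ s := s.max'_mem hne
        have hAl : A < P.l i₀ := by
          by_contra h
          push_neg at h
          exact hi₀s A hAmem ⟨h, hi₀w.1⟩
        have hgB : P.g i₀ < B := by
          by_contra h
          push_neg at h
          exact hi₀s B hBmem ⟨hi₀w.2, h⟩
        set s₁ := s.filter (fun x => x < P.l i₀) with hs₁def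
        set s₂ := s.filter (fun x => ¬ x < P.l i₀) with hs₂def
        have hunion : s₁ ∪ s₂ = s := Finset.filter_union_filter_not_eq _ s
        have hdisj : Disjoint s₁ s₂ := Finset.disjoint_filter_filter_not s s _
        have hA1 : A ∈ s₁ := Finset.mem_filter.mpr ⟨hAmem, hAl⟩
        have hB2 : B ∈ s₂ := Finset.mem_filter.mpr ⟨hBmem, by
          push_neg
          exact le_trans (P.l_le_g i₀) (le_of_lt hgB)⟩
        have hc1 : s₁.card < c := by
          rw [← hcard]
          apply Finset.card_lt_card
          refine ⟨Finset.filter_subset _ _, fun hss => ?_⟩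
          have hBfil := Finset.mem_filter.mp (hss hBmem)
          exact absurd hBfil.2 (not_lt.mpr (le_trans (P.l_le_g i₀) (le_of_lt hgB)))
        have hc2 : s₂.card < c := by
          rw [← hcard]
          apply Finset.card_lt_card
          refine ⟨Finset.filter_subset _ _, fun hss => ?_⟩
          have hAfil := Finset.mem_filter.mp (hss hAmem)
          exact hAfil.2 hAl
        have ih1 := IH _ hc1 s₁ rfl (fun x hx => hsI (Finset.filter_subset _ _ hx))
        have ih2 := IH _ hc2 s₂ rfl (fun x hx => hsI (Finset.filter_subset _ _ hx))
        have hdisjU : Disjoint (s₁.biUnion t) (s₂.biUnion t) := by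
          rw [Finset.disjoint_left]
          intro i hi1 hi2
          obtain ⟨x, hxs₁, hxt⟩ := Finset.mem_biUnion.mp hi1
          obtain ⟨y, hys₂, hyt⟩ := Finset.mem_biUnion.mp hi2
          simp only [ht, Finset.mem_filter, Finset.mem_univ, true_and] at hxt hyt
          have hxlt : x < P.l i₀ := (Finset.mem_filter.mp hxs₁).2
          have hyge : P.l i₀ ≤ y := le_of_not_gt (Finset.mem_filter.mp hys₂).2
          have hii₀ : i < i₀ := by
            have : P.l i < P.l i₀ := lt_of_le_of_lt hxt.1 hxlt
            exact (P.l_strictMono.lt_iff_lt).mp this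
          have hygt : P.g i₀ < y := by
            by_contra h
            push_neg at h
            exact hi₀s y (Finset.filter_subset _ _ hys₂) ⟨hyge, h⟩
          have hi₀i : i₀ < i := by
            have : P.g i₀ < P.g i := lt_of_lt_of_le hygt hyt.2
            exact (P.g_strictMono.lt_iff_lt).mp this
          exact absurd hii₀ (not_lt.mpr (le_of_lt hi₀i))
        calc s.card = s₁.card + s₂.card := by
              rw [← hunion, Finset.card_union_of_disjoint hdisj]
          _ ≤ (s₁.biUnion t).card + (s₂.biUnion t).card := Nat.add_le_add ih1 ih2
          _ = ((s₁.biUnion t) ∪ (s₂.biUnion t)).card :=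
              (Finset.card_union_of_disjoint hdisjU).symm
          _ = ((s₁ ∪ s₂).biUnion t).card := by
              congr 1
              ext i
              simp only [Finset.mem_union, Finset.mem_biUnion]
              constructor
              · rintro (⟨x, hx, hi⟩ | ⟨x, hx, hi⟩)
                exacts [⟨x, Or.inl hx, hi⟩, ⟨x, Or.inr hx, hi⟩]
              · rintro ⟨x, hx | hx, hi⟩
                exacts [Or.inl ⟨x, hx, hi⟩, Or.inr ⟨x, hx, hi⟩]
          _ = (s.biUnion t).card := by rw [hunion]
  -- apply Hall's theorem
  haveI : Fintype I := hIfin.fintype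
  have hall : ∀ s : Finset I, s.card ≤ (s.biUnion (fun x => t x.1)).card := by
    intro s
    have himg : (s.image (Subtype.val)).biUnion t = s.biUnion (fun x => t x.1) := by
      ext i
      simp only [Finset.mem_biUnion, Finset.mem_image]
      constructor
      · rintro ⟨x, ⟨y, hy, rfl⟩, hx⟩
        exact ⟨y, hy, hx⟩
      · rintro ⟨y, hy, hx⟩
        exact ⟨y.1, ⟨y, hy, rfl⟩, hx⟩
    have hcardim : (s.image (Subtype.val)).card = s.card :=
      Finset.card_image_of_injective s Subtype.val_injective
    have := key (s.image (Subtype.val)).card (s.image (Subtype.val)) rfl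
      (fun x hx => by
        obtain ⟨y, -, rfl⟩ := Finset.mem_image.mp hx
        exact y.2)
    rw [hcardim, himg] at this
    exact this
  obtain ⟨f, hfinj, hfmem⟩ :=
    (Finset.all_card_le_biUnion_card_iff_exists_injective (fun x : I => t x.1)).mp hall
  refine ⟨f, hfinj, fun x => ?_⟩
  have := hfmem x
  simp only [ht, Finset.mem_filter, Finset.mem_univ, true_and] at this
  exact this

end LPMAux

namespace LPMAux

open LPM Matroid

variable {α β : Type*} {M : Matroid α}

section RkLemmas

variable (hE : M.E.Finite)

lemma rkSet_nonempty (X : Set α) : ∃ n, n ∈ {n | ∃ I, I ⊆ X ∧ M.Indep I ∧ I.ncard = n} :=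
  ⟨0, ∅, Set.empty_subset X, M.empty_indep, Set.ncard_empty _⟩

include hE in
lemma rkSet_bddAbove (X : Set α) : BddAbove {n | ∃ I, I ⊆ X ∧ M.Indep I ∧ I.ncard = n} := by
  refine ⟨M.E.ncard, fun n hn => ?_⟩
  obtain ⟨I, -, hI, rfl⟩ := hn
  exact Set.ncard_le_ncard hI.subset_ground hE

include hE in
lemma le_rk {X I : Set α} (hIX : I ⊆ X) (hI : M.Indep I) : I.ncard ≤ rk M X :=
  le_csSup (rkSet_bddAbove hE X) ⟨I, hIX, hI, rfl⟩

lemma rk_le {X : Set α} {c : ℕ} (h : ∀ I, I ⊆ X → M.Indep I → I.ncard ≤ c) :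
    rk M X ≤ c := by
  apply csSup_le (Set.nonempty_def.mpr (rkSet_nonempty X))
  rintro n ⟨I, hIX, hI, rfl⟩
  exact h I hIX hI

include hE in
lemma exists_rk_attained (X : Set α) : ∃ I, I ⊆ X ∧ M.Indep I ∧ I.ncard = rk M X :=
  Nat.sSup_mem (Set.nonempty_def.mpr (rkSet_nonempty X)) (rkSet_bddAbove hE X)

include hE in
lemma rk_mono {X Y : Set α} (hXY : X ⊆ Y) : rk M X ≤ rk M Y :=
  rk_le (fun I hIX hI => le_rk hE (hIX.trans hXY) hI)

include hE in
/-- Adding a ground element outside a flat increases the rank. -/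
lemma rk_insert_of_flat {F : Set α} (hF : M.IsFlat F) {x : α} (hx : x ∈ M.E \ F) :
    rk M F + 1 ≤ rk M (insert x F) := by
  obtain ⟨I, hIF, hI, hIcard⟩ := exists_rk_attained hE F
  have hxI : x ∉ I := fun h => hx.2 (hIF h)
  have hxcl : x ∉ M.closure I := fun h =>
    hx.2 (hF.closure ▸ M.closure_subset_closure hIF h)
  have hins : M.Indep (insert x I) :=
    (hI.insert_indep_iff_of_notMem hxI).mpr ⟨hx.1, hxcl⟩
  have hcard : (insert x I).ncard = rk M F + 1 := by
    rw [Set.ncard_insert_of_notMem hxI (hE.subset hI.subset_ground), hIcard]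
  rw [← hcard]
  exact le_rk hE (Set.insert_subset_insert hIF) hins

include hE in
/-- A set whose rank grows upon adding any outside ground element is a flat. -/
lemma flat_of_rk {F : Set α} (hFE : F ⊆ M.E)
    (h : ∀ x ∈ M.E \ F, rk M (insert x F) ≠ rk M F) : M.IsFlat F := by
  have hcl : M.closure F ⊆ F := by
    intro x hxcl
    by_contra hxF
    have hxE : x ∈ M.E := M.closure_subset_ground F hxcl
    refine h x ⟨hxE, hxF⟩ ?_
    refine le_antisymm ?_ (rk_mono hE (Set.subset_insert x F))
    apply rk_le
    intro I hIins hI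
    by_cases hxI : x ∈ I
    · set I₀ := I \ {x} with hI₀def
      have hI₀F : I₀ ⊆ F := by
        intro y hy
        rcases hIins hy.1 with rfl | hyF
        · exact absurd rfl hy.2
        · exact hyF
      have hI₀ : M.Indep I₀ := hI.subset Set.diff_subset
      obtain ⟨J, hJ, hI₀J⟩ := hI₀.subset_isBasis_of_subset hI₀F hFE
      have hxclJ : x ∈ M.closure J := by
        rw [hJ.closure_eq_closure]
        exact hxcl
      have hIeq : insert x I₀ = I := by
        rw [hI₀def, Set.insert_diff_singleton, Set.insert_eq_self.mpr hxI]
      have hxnotI₀ : x ∉ I₀ := fun hh => hh.2 rfl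
      have hxclI₀ : x ∉ M.closure I₀ := by
        have hins : M.Indep (insert x I₀) := hIeq ▸ hI
        exact ((hI₀.insert_indep_iff_of_notMem hxnotI₀).mp hins).2
      have hne : I₀ ≠ J := fun hh => hxclI₀ (hh ▸ hxclJ)
      have hfinJ : J.Finite := hE.subset hJ.indep.subset_ground
      have hlt : I₀.ncard < J.ncard :=
        Set.ncard_lt_ncard (ssubset_of_subset_of_ne hI₀J hne) hfinJ
      have : I.ncard = I₀.ncard + 1 := by
        rw [← hIeq, Set.ncard_insert_of_notMem hxnotI₀ (hE.subset (hI₀.subset_ground))]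
      rw [this]
      exact le_trans hlt (le_rk hE hJ.subset hJ.indep)
    · apply le_rk hE _ hI
      intro y hy
      rcases hIins hy with rfl | hyF
      · exact absurd hy hxI
      · exact hyF
  constructor
  · intro I X hIF hIX
    have h1 : X ⊆ M.closure X := M.subset_closure X hIX.subset_ground
    rw [← hIX.closure_eq_closure, hIF.closure_eq_closure] at h1
    exact h1.trans hcl
  · exact hFE

end RkLemmas

end LPMAux

namespace LPMCore

open LPM LPMAux Matroid Set

variable {m r : ℕ} {P : LPP m r} {M₀ : Matroid ℕ}

lemma ground_finite (hM₀ : IsLPMOf P M₀) : M₀.E.Finite := by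
  rw [hM₀.1]; exact Set.finite_Icc _ _

lemma rk_le_hw (hM₀ : IsLPMOf P M₀) {X : Set ℕ} {a b : ℕ} (hX : X ⊆ Set.Icc a b) :
    rk M₀ X ≤ hw P a b := by
  apply rk_le
  intro I hIX hI
  have hPT : IsPT P.N I := ((hM₀.2 I).mp hI).2
  have := window_of_isPT hPT a b
  rwa [Set.inter_eq_left.mpr (hIX.trans hX)] at this

lemma rank_ground (hM₀ : IsLPMOf P M₀) : rk M₀ M₀.E = r := by
  apply le_antisymm
  · -- every independent set has at most r elements
    apply rk_le
    intro I _ hI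
    obtain ⟨f, hinj, -⟩ := ((hM₀.2 I).mp hI).2
    have h1 : Nat.card I ≤ Nat.card (Fin r) := Nat.card_le_card_of_injective f hinj
    rwa [Nat.card_coe_set_eq, Nat.card_eq_fintype_card, Fintype.card_fin] at h1
  · -- the left endpoints form an independent set of size r
    have hL : M₀.Indep (Set.range P.l) := by
      rw [hM₀.2]
      constructor
      · rintro x ⟨i, rfl⟩
        exact ⟨P.one_le_l i, le_trans (P.l_le_g i) (P.g_le i)⟩
      · refine ⟨fun x => (Set.mem_range.mp x.2).choose, ?_, ?_⟩
        · intro x y hxy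
          have hx1 := (Set.mem_range.mp x.2).choose_spec
          have hy1 := (Set.mem_range.mp y.2).choose_spec
          apply Subtype.ext
          rw [← hx1, ← hy1]
          exact congrArg P.l hxy
        · intro x
          have hx1 := (Set.mem_range.mp x.2).choose_spec
          exact ⟨le_of_eq hx1, hx1 ▸ P.l_le_g _⟩
    have hcard : (Set.range P.l).ncard = r := by
      rw [← Set.image_univ, Set.ncard_image_of_injective _ P.l_strictMono.injective,
        Set.ncard_univ, Nat.card_eq_fintype_card, Fintype.card_fin]
    rw [← hcard]
    have hsub : Set.range P.l ⊆ M₀.E := by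
      rw [hM₀.1]
      rintro x ⟨i, rfl⟩
      exact ⟨P.one_le_l i, le_trans (P.l_le_g i) (P.g_le i)⟩
    exact le_rk (ground_finite hM₀) hsub hL

/-- Core structure lemma: a nontrivial connected flat of positive rank is an
integer interval whose rank equals the number of intervals meeting it. -/
lemma core (hM₀ : IsLPMOf P M₀) {F : Set ℕ} (hF : NTConnFlat M₀ F) (hrk1 : 1 ≤ rk M₀ F) :
    F = Set.Icc (sInf F) (sSup F) ∧ hw P (sInf F) (sSup F) = rk M₀ F := by
  classical
  have hE₀ : M₀.E.Finite := ground_finite hM₀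
  have hFE : F ⊆ M₀.E := hF.1.subset_ground
  have hFfin : F.Finite := hE₀.subset hFE
  have hFne : F.Nonempty := by
    by_contra h
    rw [Set.not_nonempty_iff_eq_empty] at h
    exact hF.2.1 (h ▸ M₀.empty_indep)
  set a := sInf F with ha
  set b := sSup F with hb
  have haF : a ∈ F := Nat.sInf_mem hFne
  have hbF : b ∈ F := Nat.sSup_mem hFne hFfin.bddAbove
  have hFab : F ⊆ Set.Icc a b := fun x hx => ⟨Nat.sInf_le hx, le_csSup hFfin.bddAbove hx⟩
  have hab : a ≤ b := (hFab haF).2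
  have hne : a ≠ b := by
    intro h
    have hsing : F = {a} := by
      apply Set.eq_singleton_iff_unique_mem.mpr
      refine ⟨haF, fun x hx => ?_⟩
      have h12 := hFab hx
      rw [Set.mem_Icc] at h12
      omega
    have : rk M₀ F = 0 := by
      apply Nat.le_zero.mp
      apply rk_le
      intro I hIF hI
      rcases Set.subset_singleton_iff_eq.mp (hsing ▸ hIF) with rfl | rfl
      · simp
      · exact absurd (hsing ▸ hI) hF.2.1
    omega
  have haltb : a < b := lt_of_le_of_ne hab hne
  -- get a circuit containing both a and b
  have hconn := hF.2.2
  rw [Connected] at hconn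
  obtain ⟨C, hCcirc, haC, hbC⟩ := hconn a (by rwa [Matroid.restrict_ground_eq])
    b (by rwa [Matroid.restrict_ground_eq]) hne
  have hCF : C ⊆ F := by
    have := hCcirc.1
    rwa [Matroid.restrict_ground_eq] at this
  have hCdep : ¬ M₀.Indep C := by
    intro h
    exact hCcirc.2.1 (Matroid.restrict_indep_iff.mpr ⟨h, hCF⟩)
  have hCmin : ∀ D, D ⊂ C → M₀.Indep D := fun D hD =>
    (Matroid.restrict_indep_iff.mp (hCcirc.2.2 D hD)).1
  have hCE : C ⊆ M₀.E := hCF.trans hFE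
  have hCfin : C.Finite := hFfin.subset hCF
  -- C violates some window
  have hCnotPT : ¬ IsPT P.N C := by
    intro h
    exact hCdep ((hM₀.2 C).mpr ⟨by rwa [← hM₀.1], h⟩)
  have hviol : ∃ a' b', hw P a' b' < (C ∩ Set.Icc a' b').ncard := by
    by_contra h
    push_neg at h
    exact hCnotPT (isPT_of_window hCfin (fun a' b' => h a' b'))
  obtain ⟨a', b', hviol⟩ := hviol
  -- C is contained in the violated window
  have hCsub : C ⊆ Set.Icc a' b' := by
    by_contra h
    have hss : C ∩ Set.Icc a' b' ⊂ C := by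
      refine ⟨Set.inter_subset_left, fun hsub => ?_⟩
      exact h (fun x hx => (hsub hx).2)
    have hindep := hCmin _ hss
    have hPT : IsPT P.N (C ∩ Set.Icc a' b') := ((hM₀.2 _).mp hindep).2
    have := window_of_isPT hPT a' b'
    rw [Set.inter_assoc, Set.inter_self] at this
    omega
  have hwab_lt : hw P a b < C.ncard := by
    have h1 : hw P a b ≤ hw P a' b' := hw_mono P (hCsub haC).1 (hCsub hbC).2
    have h2 : (C ∩ Set.Icc a' b').ncard = C.ncard := by
      rw [Set.inter_eq_left.mpr hCsub]
    omega
  -- C minus a point is independent of size ncard C - 1, inside [a,b]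
  have hCab : C ⊆ Set.Icc a b := hCF.trans hFab
  have hDss : C \ {b} ⊂ C := Set.sdiff_singleton_ssubset.mpr hbC
  have hDindep := hCmin _ hDss
  have hDcard : (C \ {b}).ncard = C.ncard - 1 := Set.ncard_diff_singleton_of_mem hbC
  have hDle : (C \ {b}).ncard ≤ hw P a b := by
    have hPT : IsPT P.N (C \ {b}) := ((hM₀.2 _).mp hDindep).2
    have := window_of_isPT hPT a b
    rwa [Set.inter_eq_left.mpr ((Set.diff_subset).trans hCab)] at this
  have hCne : C.Nonempty := ⟨a, haC⟩
  have hCpos : 1 ≤ C.ncard := (Set.ncard_pos hCfin).mpr hCne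
  have hwab : hw P a b = rk M₀ F := by
    apply le_antisymm
    · have h1 : (C \ {b}).ncard ≤ rk M₀ F :=
        le_rk hE₀ ((Set.diff_subset).trans hCF) hDindep
      omega
    · exact rk_le_hw hM₀ hFab
  have hIccF : Set.Icc a b ⊆ F := by
    intro y hy
    by_contra hyF
    have hyE : y ∈ M₀.E := by
      have haE := hFE haF
      have hbE := hFE hbF
      rw [hM₀.1] at haE hbE ⊢
      rw [Set.mem_Icc] at haE hbE ⊢
      rw [Set.mem_Icc] at hy
      omega
    have h1 := rk_insert_of_flat hE₀ hF.1 ⟨hyE, hyF⟩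
    have h2 : rk M₀ (insert y F) ≤ hw P a b :=
      rk_le_hw hM₀ (Set.insert_subset hy hFab)
    omega
  exact ⟨Set.Subset.antisymm hFab hIccF, hwab⟩

/-- Number of intervals entirely to the left of `a`. -/
def pcnt (P : LPP m r) (a : ℕ) : ℕ :=
  (Finset.univ.filter (fun i : Fin r => P.g i < a)).card

lemma pcnt_add_hw_le (P : LPP m r) {a b : ℕ} : pcnt P a + hw P a b ≤ r := by
  have hdis : Disjoint (Finset.univ.filter (fun i : Fin r => P.g i < a))
      (Finset.univ.filter (fun i : Fin r => a ≤ P.g i ∧ P.l i ≤ b)) := by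
    rw [Finset.disjoint_left]
    intro i hi1 hi2
    simp only [Finset.mem_filter, Finset.mem_univ, true_and] at hi1 hi2
    omega
  have := Finset.card_union_of_disjoint hdis
  have hle := Finset.card_le_card (Finset.subset_univ
    ((Finset.univ.filter (fun i : Fin r => P.g i < a)) ∪
     (Finset.univ.filter (fun i : Fin r => a ≤ P.g i ∧ P.l i ≤ b))))
  rw [this] at hle
  simpa [pcnt, hw, Finset.card_univ] using hle

lemma step_min (hM₀ : IsLPMOf P M₀) {F' : Set ℕ} {a b a' b' : ℕ}
    (hF' : M₀.IsFlat F') (hF'eq : F' = Set.Icc a' b') (hab' : a' ≤ b')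
    (haE : a ∈ M₀.E)
    (hww : hw P a b = hw P a' b')
    (hρ : hw P a' b' = rk M₀ F')
    (hp : (Finset.univ.filter (fun i : Fin r => P.g i < a)).card
        = (Finset.univ.filter (fun i : Fin r => P.g i < a')).card)
    (hle : a ≤ a') : a' ≤ a := by
  by_contra hlt
  push_neg at hlt
  have hT : (Finset.univ.filter (fun i : Fin r => P.g i < a))
      = (Finset.univ.filter (fun i : Fin r => P.g i < a')) := by
    apply Finset.eq_of_subset_of_card_le
    · intro i hi
      simp only [Finset.mem_filter, Finset.mem_univ, true_and] at hi ⊢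
      omega
    · exact le_of_eq hp.symm
  have hgiff : ∀ i : Fin r, (P.g i < a ↔ P.g i < a') := by
    intro i
    have h1 := Finset.ext_iff.mp hT i
    simpa using h1
  have hww2 : hw P a b' = hw P a' b' := by
    unfold hw
    congr 1
    ext i
    simp only [Finset.mem_filter, Finset.mem_univ, true_and]
    have := hgiff i
    constructor
    · rintro ⟨h1, h2⟩
      exact ⟨by omega, h2⟩
    · rintro ⟨h1, h2⟩
      exact ⟨by omega, h2⟩
  have haF' : a ∉ F' := by
    rw [hF'eq]
    intro h
    rw [Set.mem_Icc] at h
    omega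
  have h1 := rk_insert_of_flat (ground_finite hM₀) hF' ⟨haE, haF'⟩
  have h2 : rk M₀ (insert a F') ≤ hw P a b' := by
    apply rk_le_hw hM₀
    rw [hF'eq]
    apply Set.insert_subset
    · rw [Set.mem_Icc]; omega
    · apply Set.Icc_subset_Icc (by omega) (le_refl _)
  omega

lemma step_max (hM₀ : IsLPMOf P M₀) {F : Set ℕ} {a b b' : ℕ}
    (hF : M₀.IsFlat F) (hFeq : F = Set.Icc a b) (hab : a ≤ b)
    (hb'E : b' ∈ M₀.E)
    (hwb' : hw P a b' = rk M₀ F)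
    (hle : b ≤ b') : b' ≤ b := by
  by_contra hlt
  push_neg at hlt
  have hbF : b' ∉ F := by
    rw [hFeq]
    intro h
    rw [Set.mem_Icc] at h
    omega
  have h1 := rk_insert_of_flat (ground_finite hM₀) hF ⟨hb'E, hbF⟩
  have h2 : rk M₀ (insert b' F) ≤ hw P a b' := by
    apply rk_le_hw hM₀
    rw [hFeq]
    apply Set.insert_subset
    · rw [Set.mem_Icc]; omega
    · exact Set.Icc_subset_Icc (le_refl _) (by omega)
  omega

lemma count (hM₀ : IsLPMOf P M₀) (k : ℕ) (hr1 : 1 ≤ r) (hk : k ≤ r - 1) :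
    {F : Set ℕ | NTConnFlat M₀ F ∧ rk M₀ F = r - k}.Finite ∧
      {F : Set ℕ | NTConnFlat M₀ F ∧ rk M₀ F = r - k}.ncard ≤ k + 1 := by
  classical
  set S := {F : Set ℕ | NTConnFlat M₀ F ∧ rk M₀ F = r - k} with hSdef
  have hρ : 1 ≤ r - k := by omega
  have hdata : ∀ F ∈ S, F = Set.Icc (sInf F) (sSup F)
      ∧ hw P (sInf F) (sSup F) = rk M₀ F := by
    intro F hF
    exact core hM₀ hF.1 (by rw [hF.2]; omega)
  have hmem : ∀ F ∈ S, sInf F ∈ F ∧ sSup F ∈ F := by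
    intro F hFS
    have hFne : F.Nonempty := by
      by_contra h
      rw [Set.not_nonempty_iff_eq_empty] at h
      exact hFS.1.2.1 (h ▸ M₀.empty_indep)
    have hFfin : F.Finite := (ground_finite hM₀).subset hFS.1.1.subset_ground
    exact ⟨Nat.sInf_mem hFne, Nat.sSup_mem hFne hFfin.bddAbove⟩
  set φ : Set ℕ → ℕ := fun F => pcnt P (sInf F) with hφ
  have hφle : ∀ F ∈ S, φ F ≤ k := by
    intro F hFS
    have h1 := (hdata F hFS).2
    have h2 := pcnt_add_hw_le P (a := sInf F) (b := sSup F)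
    rw [h1, hFS.2] at h2
    have : r - k ≤ r := Nat.sub_le _ _
    simp only [hφ]
    omega
  have hinj : Set.InjOn φ S := by
    intro F hFS F' hF'S hpeq
    obtain ⟨hFeq, hFw⟩ := hdata F hFS
    obtain ⟨hF'eq, hF'w⟩ := hdata F' hF'S
    obtain ⟨haF, hbF⟩ := hmem F hFS
    obtain ⟨haF', hbF'⟩ := hmem F' hF'S
    have hab : sInf F ≤ sSup F := by
      have := hFeq ▸ haF
      rw [Set.mem_Icc] at this
      exact le_trans this.1 this.2
    have hab' : sInf F' ≤ sSup F' := by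
      have := hF'eq ▸ haF'
      rw [Set.mem_Icc] at this
      exact le_trans this.1 this.2
    have haE : sInf F ∈ M₀.E := hFS.1.1.subset_ground haF
    have haE' : sInf F' ∈ M₀.E := hF'S.1.1.subset_ground haF'
    have hbE : sSup F ∈ M₀.E := hFS.1.1.subset_ground hbF
    have hbE' : sSup F' ∈ M₀.E := hF'S.1.1.subset_ground hbF'
    have hww : hw P (sInf F) (sSup F) = hw P (sInf F') (sSup F') := by
      rw [hFw, hF'w, hFS.2, hF'S.2]
    have hpeq' : pcnt P (sInf F) = pcnt P (sInf F') := hpeq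
    have haa : sInf F = sInf F' := by
      rcases le_total (sInf F) (sInf F') with h | h
      · exact le_antisymm h (step_min hM₀ hF'S.1.1 hF'eq hab' haE hww hF'w hpeq' h)
      · exact (le_antisymm h (step_min hM₀ hFS.1.1 hFeq hab haE' hww.symm hFw
          hpeq'.symm h)).symm
    have hbb : sSup F = sSup F' := by
      rcases le_total (sSup F) (sSup F') with h | h
      · refine le_antisymm h ?_
        apply step_max hM₀ hFS.1.1 hFeq hab hbE'
        · rw [haa, hF'w, hFS.2, hF'S.2]
        · exact h
      · refine (le_antisymm h ?_).symm
        apply step_max hM₀ hF'S.1.1 hF'eq hab' hbE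
        · rw [← haa, hFw, hFS.2, hF'S.2]
        · exact h
    rw [hFeq, hF'eq, haa, hbb]
  have himg : φ '' S ⊆ Set.Iic k := by
    rintro _ ⟨F, hFS, rfl⟩
    exact hφle F hFS
  have himgfin : (φ '' S).Finite := (Set.finite_Iic k).subset himg
  have hSfin : S.Finite := Set.Finite.of_finite_image himgfin hinj
  refine ⟨hSfin, ?_⟩
  have h1 : S.ncard = (φ '' S).ncard := (Set.ncard_image_of_injOn hinj).symm
  have h2 : (φ '' S).ncard ≤ (Set.Iic k).ncard := Set.ncard_le_ncard himg (Set.finite_Iic k)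
  have h3 : (Set.Iic k).ncard = k + 1 := by
    rw [← Finset.coe_Iic, Set.ncard_coe_finset, Nat.card_Iic]
  omega

end LPMCore

namespace LPMTrans

open LPM LPMAux Matroid Set

variable {α : Type*} {M : Matroid α} {M₀ : Matroid ℕ} {f : α → ℕ}

lemma rk_transfer (hbij : Set.BijOn f M.E M₀.E)
    (hind : ∀ I ⊆ M.E, (M.Indep I ↔ M₀.Indep (f '' I)))
    {X : Set α} (hX : X ⊆ M.E) : rk M X = rk M₀ (f '' X) := by
  unfold rk
  congr 1
  ext n
  constructor
  · rintro ⟨I, hIX, hI, rfl⟩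
    exact ⟨f '' I, Set.image_mono hIX, (hind I (hIX.trans hX)).mp hI,
      Set.ncard_image_of_injOn (hbij.injOn.mono (hIX.trans hX))⟩
  · rintro ⟨J, hJX, hJ, rfl⟩
    refine ⟨f ⁻¹' J ∩ X, Set.inter_subset_right, ?_, ?_⟩
    · have himg : f '' (f ⁻¹' J ∩ X) = J := by
        rw [Set.image_preimage_inter, Set.inter_eq_left.mpr hJX]
      rw [hind _ (Set.inter_subset_right.trans hX), himg]
      exact hJ
    · have himg : f '' (f ⁻¹' J ∩ X) = J := by
        rw [Set.image_preimage_inter, Set.inter_eq_left.mpr hJX]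
      have h4 := Set.ncard_image_of_injOn (hbij.injOn.mono (Set.inter_subset_right.trans hX))
        (f := f) (s := f ⁻¹' J ∩ X)
      rw [himg] at h4
      exact h4.symm

lemma flat_transfer (hbij : Set.BijOn f M.E M₀.E)
    (hind : ∀ I ⊆ M.E, (M.Indep I ↔ M₀.Indep (f '' I)))
    (hE₀ : M₀.E.Finite) {F : Set α} (hF : M.IsFlat F) : M₀.IsFlat (f '' F) := by
  have hEfin : M.E.Finite :=
    Set.Finite.of_finite_image (hbij.image_eq.symm ▸ hE₀) hbij.injOn
  have hFE : F ⊆ M.E := hF.subset_ground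
  apply flat_of_rk hE₀ ((Set.image_mono hFE).trans hbij.image_eq.subset)
  intro y hy
  obtain ⟨x, hxE, rfl⟩ := hbij.surjOn hy.1
  have hxF : x ∉ F := fun h => hy.2 (Set.mem_image_of_mem f h)
  have h1 := rk_insert_of_flat hEfin hF ⟨hxE, hxF⟩
  have h2 : rk M₀ (insert (f x) (f '' F)) = rk M (insert x F) := by
    rw [← Set.image_insert_eq, ← rk_transfer hbij hind (Set.insert_subset hxE hFE)]
  have h3 : rk M₀ (f '' F) = rk M F := (rk_transfer hbij hind hFE).symm
  omega

lemma circuit_transfer (hbij : Set.BijOn f M.E M₀.E)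
    (hind : ∀ I ⊆ M.E, (M.Indep I ↔ M₀.Indep (f '' I)))
    {F C : Set α} (hFE : F ⊆ M.E) (hC : Circuit (M ↾ F) C) :
    Circuit (M₀ ↾ (f '' F)) (f '' C) := by
  have hCF : C ⊆ F := by
    have := hC.1
    rwa [Matroid.restrict_ground_eq] at this
  have hCE : C ⊆ M.E := hCF.trans hFE
  refine ⟨?_, ?_, ?_⟩
  · rw [Matroid.restrict_ground_eq]
    exact Set.image_mono hCF
  · intro h
    rw [Matroid.restrict_indep_iff] at h
    exact hC.2.1 (Matroid.restrict_indep_iff.mpr ⟨(hind C hCE).mpr h.1, hCF⟩)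
  · intro D' hD'
    have hD'C : D' ⊆ f '' C := hD'.subset
    set D := f ⁻¹' D' ∩ C with hDdef
    have himg : f '' D = D' := by
      rw [hDdef, Set.image_preimage_inter, Set.inter_eq_left.mpr hD'C]
    have hDC : D ⊂ C := by
      refine ⟨Set.inter_subset_right, fun h => hD'.ne ?_⟩
      have hDeq : D = C := Set.Subset.antisymm Set.inter_subset_right h
      rw [← himg, hDeq]
    have hDind := (Matroid.restrict_indep_iff.mp (hC.2.2 D hDC)).1
    rw [Matroid.restrict_indep_iff]
    exact ⟨himg ▸ (hind D (Set.inter_subset_right.trans hCE)).mp hDind,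
      hD'C.trans (Set.image_mono hCF)⟩

end LPMTrans

namespace LPMFinal

open LPM LPMAux LPMCore LPMTrans Matroid Set

lemma ntconn_transfer {α : Type*} {M : Matroid α} {M₀ : Matroid ℕ} {f : α → ℕ}
    (hbij : Set.BijOn f M.E M₀.E)
    (hind : ∀ I ⊆ M.E, (M.Indep I ↔ M₀.Indep (f '' I)))
    (hE₀ : M₀.E.Finite) {F : Set α} (hF : NTConnFlat M F) : NTConnFlat M₀ (f '' F) := by
  have hFE : F ⊆ M.E := hF.1.subset_ground
  refine ⟨flat_transfer hbij hind hE₀ hF.1, ?_, ?_⟩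
  · intro h
    exact hF.2.1 ((hind F hFE).mpr h)
  · intro x' hx' y' hy' hne
    rw [Matroid.restrict_ground_eq] at hx' hy'
    obtain ⟨x, hxF, rfl⟩ := hx'
    obtain ⟨y, hyF, rfl⟩ := hy'
    have hxy : x ≠ y := fun h => hne (congrArg f h)
    obtain ⟨C, hC, hxC, hyC⟩ := hF.2.2 x (by rwa [Matroid.restrict_ground_eq])
      y (by rwa [Matroid.restrict_ground_eq]) hxy
    exact ⟨f '' C, circuit_transfer hbij hind hFE hC,
      Set.mem_image_of_mem f hxC, Set.mem_image_of_mem f hyC⟩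

end LPMFinal


open LPM in
/-- A lattice path matroid of rank `r` has at most `k + 1`
nontrivial connected flats of rank `r − k`, for every `0 ≤ k ≤ r − 1`. -/
theorem stmt14 {α : Type*} (M : Matroid α) (hM : IsLPMatroid M)
    (r : ℕ) (hr1 : 1 ≤ r) (hr : rk M M.E = r)
    (k : ℕ) (hk : k ≤ r - 1) :
    {F : Set α | NTConnFlat M F ∧ rk M F = r - k}.Finite ∧
      {F : Set α | NTConnFlat M F ∧ rk M F = r - k}.ncard ≤ k + 1 := by
  obtain ⟨m, r', P, M₀, hM₀, f, hbij, hind⟩ := hM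
  have hE₀ : M₀.E.Finite := LPMCore.ground_finite hM₀
  have hr' : r' = r := by
    have h1 : rk M M.E = rk M₀ (f '' M.E) := LPMTrans.rk_transfer hbij hind Set.Subset.rfl
    rw [hbij.image_eq, LPMCore.rank_ground hM₀] at h1
    omega
  subst hr'
  set S := {F : Set α | NTConnFlat M F ∧ rk M F = r' - k} with hSdef
  set S₀ := {F : Set ℕ | NTConnFlat M₀ F ∧ rk M₀ F = r' - k} with hS₀def
  have hcount := LPMCore.count hM₀ k hr1 hk
  have hmap : ∀ F ∈ S, f '' F ∈ S₀ := by
    intro F hF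
    refine ⟨LPMFinal.ntconn_transfer hbij hind hE₀ hF.1, ?_⟩
    rw [← LPMTrans.rk_transfer hbij hind hF.1.1.subset_ground]
    exact hF.2
  have hinj : Set.InjOn (Set.image f) S := by
    intro F hF F' hF' heq
    have hFE : F ⊆ M.E := hF.1.1.subset_ground
    have hF'E : F' ⊆ M.E := hF'.1.1.subset_ground
    apply Set.Subset.antisymm
    · intro x hx
      have : f x ∈ f '' F' := heq ▸ Set.mem_image_of_mem f hx
      obtain ⟨y, hyF', hfeq⟩ := this
      rwa [← hbij.injOn (hF'E hyF') (hFE hx) hfeq]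
    · intro x hx
      have : f x ∈ f '' F := heq ▸ Set.mem_image_of_mem f hx
      obtain ⟨y, hyF, hfeq⟩ := this
      rwa [← hbij.injOn (hFE hyF) (hF'E hx) hfeq]
  have himgsub : (Set.image f) '' S ⊆ S₀ := by
    rintro _ ⟨F, hF, rfl⟩
    exact hmap F hF
  refine ⟨Set.Finite.of_finite_image (hcount.1.subset himgsub) hinj, ?_⟩
  calc S.ncard = ((Set.image f) '' S).ncard := (Set.ncard_image_of_injOn hinj).symm
    _ ≤ S₀.ncard := Set.ncard_le_ncard himgsub hcount.1
    _ ≤ k + 1 := hcount.2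
end

section
/- Let M be a finite matroid of rank r that has two nontrivial connected flats X and X′ satisfying (1) X ∩ X′ ≠ ∅, (2) r(X ∪ X′) = r, and (3) X ∪ X′ is a proper subset of the ground set E(M). Then M is not a lattice path matroid, i.e., M is not isomorphic to M[N] for any lattice path presentation N. -/
open Set
open scoped Matroid

namespace LPM
variable {m r : ℕ}

theorem mem_N_iff {P : LPP m r} {x : ℕ} {i : Fin r} : x ∈ P.N i ↔ P.l i ≤ x ∧ x ≤ P.g i :=
  Set.mem_Icc

theorem exists_mono_aux (P : LPP m r) (hr : 0 < r) :
    ∀ (k : ℕ) (I : Set ℕ), I.Finite → I.ncard = k →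
      ∀ f : ℕ → Fin r, Set.InjOn f I → (∀ x ∈ I, x ∈ P.N (f x)) →
      ∃ φ : ℕ → Fin r, StrictMonoOn φ I ∧ (∀ x ∈ I, x ∈ P.N (φ x)) ∧
        (∀ x ∈ I, ∃ y ∈ I, φ x = f y) := by
  intro k
  induction k with
  | zero =>
    intro I hfin hcard f _ _
    have hI : I = ∅ := by rwa [Set.ncard_eq_zero hfin] at hcard
    subst hI
    exact ⟨fun _ => ⟨0, hr⟩, by simp [StrictMonoOn], by simp, by simp⟩
  | succ k ih =>
    intro I hfin hcard f hinj hmem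
    classical
    have hne : I.Nonempty := by
      rw [Set.nonempty_iff_ne_empty]; rintro rfl; simp at hcard
    obtain ⟨xh, hxhI, hxhmax⟩ := Set.Finite.exists_maximalFor id I hfin hne
    have hxhub : ∀ y ∈ I, y ≤ xh := by
      intro y hy
      by_contra h
      push_neg at h
      have := hxhmax hy (le_of_lt h)
      simp only [id] at this
      omega
    obtain ⟨x0, hx0I, hx0max⟩ := Set.Finite.exists_maximalFor f I hfin hne
    have hx0ub : ∀ y ∈ I, f y ≤ f x0 := by
      intro y hy
      by_contra h
      push_neg at h
      have := hx0max hy (le_of_lt h)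
      exact absurd h (not_lt.mpr this)
    set σ := Equiv.swap xh x0 with hσ
    set f1 : ℕ → Fin r := fun v => f (σ v) with hf1
    have hσI : ∀ v ∈ I, σ v ∈ I := by
      intro v hv
      rcases eq_or_ne v xh with rfl | h1
      · simpa [hσ, Equiv.swap_apply_left] using hx0I
      rcases eq_or_ne v x0 with rfl | h2
      · simpa [hσ, Equiv.swap_apply_right] using hxhI
      · simpa [hσ, Equiv.swap_apply_of_ne_of_ne h1 h2] using hv
    have hf1inj : Set.InjOn f1 I := fun a ha b hb hab =>
      σ.injective (hinj (hσI a ha) (hσI b hb) hab)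
    have hswap1 : xh ∈ P.N (f x0) := by
      rw [mem_N_iff]
      constructor
      · exact le_trans (mem_N_iff.mp (hmem x0 hx0I)).1 (hxhub x0 hx0I)
      · exact le_trans (mem_N_iff.mp (hmem xh hxhI)).2
          (P.g_strictMono.monotone (hx0ub xh hxhI))
    have hswap2 : x0 ∈ P.N (f xh) := by
      rw [mem_N_iff]
      constructor
      · exact le_trans (P.l_strictMono.monotone (hx0ub xh hxhI))
          (mem_N_iff.mp (hmem x0 hx0I)).1
      · exact le_trans (hxhub x0 hx0I) (mem_N_iff.mp (hmem xh hxhI)).2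
    have hf1mem : ∀ v ∈ I, v ∈ P.N (f1 v) := by
      intro v hv
      rcases eq_or_ne v xh with rfl | h1
      · simpa only [hf1, hσ, Equiv.swap_apply_left] using hswap1
      rcases eq_or_ne v x0 with rfl | h2
      · simpa only [hf1, hσ, Equiv.swap_apply_right] using hswap2
      · simp only [hf1, hσ, Equiv.swap_apply_of_ne_of_ne h1 h2]
        exact hmem v hv
    have hI'fin : (I \ {xh}).Finite := hfin.subset diff_subset
    have hI'card : (I \ {xh}).ncard = k := by
      rw [Set.ncard_diff_singleton_of_mem hxhI, hcard]
      omega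
    obtain ⟨φ', hφ'mono, hφ'mem, hφ'rng⟩ := ih (I \ {xh}) hI'fin hI'card f1
      (hf1inj.mono diff_subset) (fun v hv => hf1mem v hv.1)
    have hlt : ∀ v ∈ I \ {xh}, φ' v < f x0 := by
      intro v hv
      obtain ⟨y, hyI', hy⟩ := hφ'rng v hv
      have hyI : y ∈ I := hyI'.1
      have hyne : y ≠ xh := hyI'.2
      have h1 : f1 y ≤ f x0 := hx0ub (σ y) (hσI y hyI)
      have h2 : f1 y ≠ f x0 := by
        intro h
        have hσy : σ y = x0 := hinj (hσI y hyI) hx0I h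
        have : y = σ x0 := by
          have := congrArg σ hσy
          rwa [Equiv.swap_apply_self] at this
        rw [hσ, Equiv.swap_apply_right] at this
        exact hyne this
      rw [hy]
      exact lt_of_le_of_ne h1 h2
    refine ⟨fun v => if v = xh then f x0 else φ' v, ?_, ?_, ?_⟩
    · intro a ha b hb hab
      by_cases h2 : b = xh
      · have h1 : a ≠ xh := by
          intro h
          exact absurd hab (by rw [h, h2]; exact lt_irrefl xh)
        simp only [if_neg h1, if_pos h2]
        exact hlt a ⟨ha, h1⟩
      · have h1 : a ≠ xh := by
          rintro rfl
          exact absurd (lt_of_lt_of_le hab (hxhub b hb)) (lt_irrefl _)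
        simp only [if_neg h1, if_neg h2]
        exact hφ'mono ⟨ha, h1⟩ ⟨hb, h2⟩ hab
    · intro v hv
      by_cases h : v = xh
      · subst h
        simpa only [if_pos rfl, ite_true] using hswap1
      · simp only [if_neg h]
        exact hφ'mem v ⟨hv, h⟩
    · intro v hv
      by_cases h : v = xh
      · exact ⟨x0, hx0I, by simp only [if_pos h]⟩
      · obtain ⟨y, hyI', hy⟩ := hφ'rng v ⟨hv, h⟩
        refine ⟨σ y, hσI y hyI'.1, ?_⟩
        simp only [if_neg h, hy, hf1]

theorem exists_matches {P : LPP m r} (hr : 0 < r) {J : Set ℕ} (hfin : J.Finite)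
    (h : IsPT P.N J) :
    ∃ φ : ℕ → Fin r, StrictMonoOn φ J ∧ ∀ x ∈ J, x ∈ P.N (φ x) := by
  classical
  obtain ⟨f, hfinj, hfmem⟩ := h
  set f0 : ℕ → Fin r := fun x => if hx : x ∈ J then f ⟨x, hx⟩ else ⟨0, hr⟩ with hf0
  have hinj : Set.InjOn f0 J := by
    intro a ha b hb hab
    simp only [hf0, dif_pos ha, dif_pos hb] at hab
    exact Subtype.ext_iff.mp (hfinj hab)
  have hmem : ∀ x ∈ J, x ∈ P.N (f0 x) := fun x hx => by
    simp only [hf0, dif_pos hx]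
    exact hfmem ⟨x, hx⟩
  obtain ⟨φ, h1, h2, -⟩ := exists_mono_aux P hr J.ncard J hfin rfl f0 hinj hmem
  exact ⟨φ, h1, h2⟩

theorem indep_iff_matches {P : LPP m r} {M₀ : Matroid ℕ} (hM : IsLPMOf P M₀) (hr : 0 < r)
    (J : Set ℕ) :
    M₀.Indep J ↔ J ⊆ M₀.E ∧ ∃ φ : ℕ → Fin r, StrictMonoOn φ J ∧ ∀ x ∈ J, x ∈ P.N (φ x) := by
  rw [hM.2 J, hM.1]
  constructor
  · rintro ⟨hsub, hpt⟩
    exact ⟨hsub, exists_matches hr ((Set.finite_Icc _ _).subset hsub) hpt⟩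
  · rintro ⟨hsub, φ, hmono, hmem⟩
    exact ⟨hsub, fun x => φ x, fun a b hab => Subtype.ext (hmono.injOn a.2 b.2 hab),
      fun x => hmem x x.2⟩


theorem merge_matches {P : LPP m r} {C : Set ℕ} {y x' z' : ℕ} {φA φB : ℕ → Fin r}
    (hyC : y ∉ C) (hx'C : x' ∈ C) (hz'C : z' ∈ C) (hx'y : x' < y) (hyz' : y < z')
    (hx'max : ∀ c ∈ C, c < y → c ≤ x') (hz'min : ∀ c ∈ C, y < c → z' ≤ c)
    (hAmono : StrictMonoOn φA (insert y (C \ {z'})))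
    (hAmem : ∀ x ∈ insert y (C \ {z'}), x ∈ P.N (φA x))
    (hBmono : StrictMonoOn φB (insert y (C \ {x'})))
    (hBmem : ∀ x ∈ insert y (C \ {x'}), x ∈ P.N (φB x)) :
    ∃ ψ : ℕ → Fin r, StrictMonoOn ψ C ∧ ∀ x ∈ C, x ∈ P.N (ψ x) := by
  classical
  have hyA : y ∈ insert y (C \ {z'}) := mem_insert _ _
  have hyB : y ∈ insert y (C \ {x'}) := mem_insert _ _
  have hmemA : ∀ c ∈ C, c ≠ z' → c ∈ insert y (C \ {z'}) :=
    fun c hc h => mem_insert_of_mem _ ⟨hc, h⟩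
  have hmemB : ∀ c ∈ C, c ≠ x' → c ∈ insert y (C \ {x'}) :=
    fun c hc h => mem_insert_of_mem _ ⟨hc, h⟩
  have hne_y : ∀ c ∈ C, c ≠ y := fun c hc h => hyC (h ▸ hc)
  have hlow_ne : ∀ c ∈ C, c < y → c ≠ z' := by
    intro c _ hcy h
    omega
  have hhigh_ne : ∀ c ∈ C, y < c → c ≠ x' := by
    intro c _ hyc h
    omega
  set bl : ℕ → Fin r := fun v => if v = x' then φB y else φB v with hbl_def
  set ah : ℕ → Fin r := fun v => if v = z' then φA y else φA v with hah_def
  -- strict monotonicity of the pieces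
  have hblmono : ∀ c₁ ∈ C, ∀ c₂ ∈ C, c₁ < c₂ → c₂ < y → bl c₁ < bl c₂ := by
    intro c₁ hc₁ c₂ hc₂ h12 h2y
    by_cases h2x : c₂ = x'
    · have h1x : c₁ ≠ x' := by omega
      simp only [hbl_def, if_neg h1x, if_pos h2x]
      exact hBmono (hmemB c₁ hc₁ h1x) hyB (by omega)
    · have h1x : c₁ ≠ x' := by
        intro h
        exact h2x (le_antisymm (hx'max c₂ hc₂ h2y) (h ▸ le_of_lt h12))
      simp only [hbl_def, if_neg h1x, if_neg h2x]
      exact hBmono (hmemB c₁ hc₁ h1x) (hmemB c₂ hc₂ h2x) h12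
  have hahmono : ∀ c₁ ∈ C, ∀ c₂ ∈ C, c₁ < c₂ → y < c₁ → ah c₁ < ah c₂ := by
    intro c₁ hc₁ c₂ hc₂ h12 hy1
    by_cases h1z : c₁ = z'
    · have h2z : c₂ ≠ z' := by omega
      simp only [hah_def, if_pos h1z, if_neg h2z]
      exact hAmono hyA (hmemA c₂ hc₂ h2z) (by omega)
    · have hz1 : z' < c₁ := lt_of_le_of_ne (hz'min c₁ hc₁ hy1) (Ne.symm h1z)
      have h2z : c₂ ≠ z' := by omega
      simp only [hah_def, if_neg h1z, if_neg h2z]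
      exact hAmono (hmemA c₁ hc₁ h1z) (hmemA c₂ hc₂ h2z) h12
  have hamono : ∀ c₁ ∈ C, ∀ c₂ ∈ C, c₁ < c₂ → c₂ < y → φA c₁ < φA c₂ := by
    intro c₁ hc₁ c₂ hc₂ h12 h2y
    exact hAmono (hmemA c₁ hc₁ (hlow_ne c₁ hc₁ (by omega))) (hmemA c₂ hc₂ (hlow_ne c₂ hc₂ h2y)) h12
  have hbmono : ∀ c₁ ∈ C, ∀ c₂ ∈ C, c₁ < c₂ → y < c₁ → φB c₁ < φB c₂ := by
    intro c₁ hc₁ c₂ hc₂ h12 hy1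
    exact hBmono (hmemB c₁ hc₁ (hhigh_ne c₁ hc₁ hy1))
      (hmemB c₂ hc₂ (hhigh_ne c₂ hc₂ (by omega))) h12
  have hcross : ∀ c₁ ∈ C, ∀ c₂ ∈ C, c₁ < y → y < c₂ → φA c₁ < ah c₂ := by
    intro c₁ hc₁ c₂ hc₂ h1y hy2
    have h1A := hmemA c₁ hc₁ (hlow_ne c₁ hc₁ h1y)
    by_cases h2z : c₂ = z'
    · simp only [hah_def, if_pos h2z]
      exact hAmono h1A hyA h1y
    · simp only [hah_def, if_neg h2z]
      exact hAmono h1A (hmemA c₂ hc₂ h2z) (by omega)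
  refine ⟨fun v => if v < y then min (φA v) (bl v) else max (ah v) (φB v), ?_, ?_⟩
  · intro c₁ hc₁ c₂ hc₂ h12
    by_cases h1 : c₁ < y <;> by_cases h2 : c₂ < y
    · simp only [if_pos h1, if_pos h2]
      exact lt_min (lt_of_le_of_lt (min_le_left _ _) (hamono c₁ hc₁ c₂ hc₂ h12 h2))
        (lt_of_le_of_lt (min_le_right _ _) (hblmono c₁ hc₁ c₂ hc₂ h12 h2))
    · -- c₁ < y ≤ c₂ : cross
      have hy2 : y < c₂ := lt_of_le_of_ne (not_lt.mp h2) (Ne.symm (hne_y c₂ hc₂))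
      simp only [if_pos h1, if_neg h2]
      exact lt_of_le_of_lt (min_le_left _ _)
        (lt_of_lt_of_le (hcross c₁ hc₁ c₂ hc₂ h1 hy2) (le_max_left _ _))
    · exact absurd h12 (by omega)
    · have hy1 : y < c₁ := lt_of_le_of_ne (not_lt.mp h1) (Ne.symm (hne_y c₁ hc₁))
      simp only [if_neg h1, if_neg h2]
      exact max_lt (lt_of_lt_of_le (hahmono c₁ hc₁ c₂ hc₂ h12 hy1) (le_max_left _ _))
        (lt_of_lt_of_le (hbmono c₁ hc₁ c₂ hc₂ h12 hy1) (le_max_right _ _))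
  · intro c hc
    by_cases hcy : c < y
    · simp only [if_pos hcy]
      rcases le_total (φA c) (bl c) with h | h
      · rw [min_eq_left h]
        exact hAmem c (hmemA c hc (hlow_ne c hc hcy))
      · rw [min_eq_right h]
        by_cases hcx : c = x'
        · subst hcx
          simp only [hbl_def, if_pos rfl] at h ⊢
          rw [mem_N_iff]
          constructor
          · exact le_trans (P.l_strictMono.monotone h)
              (mem_N_iff.mp (hAmem c (hmemA c hc (hlow_ne c hc hcy)))).1
          · exact le_trans (le_of_lt hcy) (mem_N_iff.mp (hBmem y hyB)).2
        · simp only [hbl_def, if_neg hcx]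
          exact hBmem c (hmemB c hc hcx)
    · have hyc : y < c := lt_of_le_of_ne (not_lt.mp hcy) (Ne.symm (hne_y c hc))
      simp only [if_neg hcy]
      rcases le_total (φB c) (ah c) with h | h
      · rw [max_eq_left h]
        by_cases hcz : c = z'
        · subst hcz
          simp only [hah_def, if_pos rfl] at h ⊢
          rw [mem_N_iff]
          constructor
          · exact le_trans (mem_N_iff.mp (hAmem y hyA)).1 (le_of_lt hyc)
          · exact le_trans (mem_N_iff.mp (hBmem c (hmemB c hc (hhigh_ne c hc hyc)))).2
              (P.g_strictMono.monotone h)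
        · simp only [hah_def, if_neg hcz]
          exact hAmem c (hmemA c hc hcz)
      · rw [max_eq_right h]
        exact hBmem c (hmemB c hc (hhigh_ne c hc hyc))

theorem flat_convex {P : LPP m r} {M₀ : Matroid ℕ} (hM : IsLPMOf P M₀) (hr : 0 < r)
    {F : Set ℕ} (hFE : F ⊆ M₀.E)
    (hFflat : ∀ S ⊆ F, M₀.Indep S → ∀ w ∈ M₀.E \ F, M₀.Indep (insert w S))
    (hFconn : ∀ p ∈ F, ∀ q ∈ F, p ≠ q →
      ∃ C ⊆ F, (¬ M₀.Indep C ∧ ∀ D ⊂ C, M₀.Indep D) ∧ p ∈ C ∧ q ∈ C)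
    {p q w : ℕ} (hp : p ∈ F) (hq : q ∈ F) (hwE : w ∈ M₀.E) (hpw : p < w) (hwq : w < q) :
    w ∈ F := by
  classical
  by_contra hwF
  obtain ⟨C, hCF, ⟨hCdep, hCmin⟩, hpC, hqC⟩ := hFconn p hp q hq (by omega)
  have hCfin : C.Finite := by
    refine (Set.finite_Icc 1 (m + r)).subset ?_
    rw [← hM.1]
    exact hCF.trans hFE
  have hwC : w ∉ C := fun h => hwF (hCF h)
  obtain ⟨x', hx'S, hx'max'⟩ := Set.Finite.exists_maximalFor id {c ∈ C | c < w}
    (hCfin.subset (sep_subset _ _)) ⟨p, hpC, hpw⟩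
  obtain ⟨z', hz'S, hz'min'⟩ := Set.Finite.exists_minimalFor id {c ∈ C | w < c}
    (hCfin.subset (sep_subset _ _)) ⟨q, hqC, hwq⟩
  have hx'C : x' ∈ C := hx'S.1
  have hz'C : z' ∈ C := hz'S.1
  have hx'max : ∀ c ∈ C, c < w → c ≤ x' := by
    intro c hc hcw
    by_contra h
    push_neg at h
    have := hx'max' ⟨hc, hcw⟩ (le_of_lt h)
    simp only [id] at this
    omega
  have hz'min : ∀ c ∈ C, w < c → z' ≤ c := by
    intro c hc hwc
    by_contra h
    push_neg at h
    have := hz'min' ⟨hc, hwc⟩ (le_of_lt h)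
    simp only [id] at this
    omega
  have hAind : M₀.Indep (insert w (C \ {z'})) :=
    hFflat _ (diff_subset.trans hCF) (hCmin _ (Set.sdiff_singleton_ssubset.mpr hz'C)) w ⟨hwE, hwF⟩
  have hBind : M₀.Indep (insert w (C \ {x'})) :=
    hFflat _ (diff_subset.trans hCF) (hCmin _ (Set.sdiff_singleton_ssubset.mpr hx'C)) w ⟨hwE, hwF⟩
  obtain ⟨-, φA, hAmono, hAmem⟩ := (indep_iff_matches hM hr _).mp hAind
  obtain ⟨-, φB, hBmono, hBmem⟩ := (indep_iff_matches hM hr _).mp hBind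
  obtain ⟨ψ, hψmono, hψmem⟩ := merge_matches hwC hx'C hz'C hx'S.2 hz'S.2 hx'max hz'min
    hAmono hAmem hBmono hBmem
  exact hCdep ((indep_iff_matches hM hr C).mpr ⟨hCF.trans hFE, ψ, hψmono, hψmem⟩)



theorem lemR {P : LPP m r} {M₀ : Matroid ℕ} (hM : IsLPMOf P M₀) (hr : 0 < r)
    {G C : Set ℕ} {b w : ℕ} (hGE : G ⊆ M₀.E)
    (hGflat : ∀ S ⊆ G, M₀.Indep S → ∀ v ∈ M₀.E \ G, M₀.Indep (insert v S))
    (hCG : C ⊆ G) (hbC : b ∈ C) (hCdep : ¬ M₀.Indep C) (hCmin : ∀ D ⊂ C, M₀.Indep D)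
    (hCb : ∀ c ∈ C, c ≤ b)
    (hwE : w ∈ M₀.E) (hwG : w ∉ G) (hbw : b < w)
    {I : Set ℕ} (hIind : M₀.Indep I) (hIcard : I.ncard = r) (hIb : ∀ x ∈ I, x ≤ b) :
    False := by
  classical
  have hSind : M₀.Indep (C \ {b}) := hCmin _ (Set.sdiff_singleton_ssubset.mpr hbC)
  have hTind : M₀.Indep (insert w (C \ {b})) :=
    hGflat _ (diff_subset.trans hCG) hSind w ⟨hwE, hwG⟩
  obtain ⟨-, φ, hφmono, hφmem⟩ := (indep_iff_matches hM hr _).mp hTind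
  obtain ⟨-, χ, hχmono, hχmem⟩ := (indep_iff_matches hM hr _).mp hIind
  set top : Fin r := ⟨r - 1, by omega⟩ with htop
  have htop_le : ∀ j : Fin r, j ≤ top := by
    intro j
    have := j.isLt
    simp only [htop, Fin.le_def]
    omega
  have himgI : χ '' I = (univ : Set (Fin r)) := by
    apply Set.eq_of_subset_of_ncard_le (subset_univ _) ?_ finite_univ
    rw [Set.ncard_image_of_injOn hχmono.injOn, hIcard, Set.ncard_univ]
    simp
  obtain ⟨xr, hxrI, hxr⟩ : top ∈ χ '' I := himgI ▸ mem_univ top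
  have hxr_mem := hχmem xr hxrI
  rw [hxr, mem_N_iff] at hxr_mem
  have hlt : P.l top ≤ b := le_trans hxr_mem.1 (hIb xr hxrI)
  have hwT : w ∈ insert w (C \ {b}) := mem_insert _ _
  have hwmem := mem_N_iff.mp (hφmem w hwT)
  have hgt : w ≤ P.g top := le_trans hwmem.2 (P.g_strictMono.monotone (htop_le (φ w)))
  have hbN : b ∈ P.N top := mem_N_iff.mpr ⟨hlt, le_trans (le_of_lt hbw) hgt⟩
  apply hCdep
  refine (indep_iff_matches hM hr C).mpr ⟨hCG.trans hGE, fun c => if c = b then top else φ c,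
    ?_, ?_⟩
  · intro c₁ hc₁ c₂ hc₂ h12
    by_cases h2 : c₂ = b
    · have h1 : c₁ ≠ b := by
        intro h
        exact absurd h12 (by rw [h, h2]; exact lt_irrefl b)
      simp only [if_neg h1, if_pos h2]
      have hc₁T : c₁ ∈ insert w (C \ {b}) := mem_insert_of_mem _ ⟨hc₁, h1⟩
      exact lt_of_lt_of_le (hφmono hc₁T hwT (lt_of_le_of_lt (hCb c₁ hc₁) hbw)) (htop_le _)
    · have h1 : c₁ ≠ b := by
        intro h
        have := hCb c₂ hc₂
        omega
      simp only [if_neg h1, if_neg h2]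
      exact hφmono (mem_insert_of_mem _ ⟨hc₁, h1⟩) (mem_insert_of_mem _ ⟨hc₂, h2⟩) h12
  · intro c hc
    by_cases h : c = b
    · simp only [if_pos h]
      rw [h]
      exact hbN
    · simp only [if_neg h]
      exact hφmem c (mem_insert_of_mem _ ⟨hc, h⟩)

theorem lemL {P : LPP m r} {M₀ : Matroid ℕ} (hM : IsLPMOf P M₀) (hr : 0 < r)
    {G C : Set ℕ} {b w : ℕ} (hGE : G ⊆ M₀.E)
    (hGflat : ∀ S ⊆ G, M₀.Indep S → ∀ v ∈ M₀.E \ G, M₀.Indep (insert v S))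
    (hCG : C ⊆ G) (hbC : b ∈ C) (hCdep : ¬ M₀.Indep C) (hCmin : ∀ D ⊂ C, M₀.Indep D)
    (hCb : ∀ c ∈ C, b ≤ c)
    (hwE : w ∈ M₀.E) (hwG : w ∉ G) (hwb : w < b)
    {I : Set ℕ} (hIind : M₀.Indep I) (hIcard : I.ncard = r) (hIb : ∀ x ∈ I, b ≤ x) :
    False := by
  classical
  have hSind : M₀.Indep (C \ {b}) := hCmin _ (Set.sdiff_singleton_ssubset.mpr hbC)
  have hTind : M₀.Indep (insert w (C \ {b})) :=
    hGflat _ (diff_subset.trans hCG) hSind w ⟨hwE, hwG⟩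
  obtain ⟨-, φ, hφmono, hφmem⟩ := (indep_iff_matches hM hr _).mp hTind
  obtain ⟨-, χ, hχmono, hχmem⟩ := (indep_iff_matches hM hr _).mp hIind
  set bot : Fin r := ⟨0, hr⟩ with hbot
  have hbot_le : ∀ j : Fin r, bot ≤ j := by
    intro j
    simp only [hbot, Fin.le_def]
    omega
  have himgI : χ '' I = (univ : Set (Fin r)) := by
    apply Set.eq_of_subset_of_ncard_le (subset_univ _) ?_ finite_univ
    rw [Set.ncard_image_of_injOn hχmono.injOn, hIcard, Set.ncard_univ]
    simp
  obtain ⟨x₁, hx₁I, hx₁⟩ : bot ∈ χ '' I := himgI ▸ mem_univ bot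
  have hx₁_mem := hχmem x₁ hx₁I
  rw [hx₁, mem_N_iff] at hx₁_mem
  have hgt : b ≤ P.g bot := le_trans (hIb x₁ hx₁I) hx₁_mem.2
  have hwT : w ∈ insert w (C \ {b}) := mem_insert _ _
  have hwmem := mem_N_iff.mp (hφmem w hwT)
  have hlt : P.l bot ≤ b :=
    le_trans (le_trans (P.l_strictMono.monotone (hbot_le (φ w))) hwmem.1) (le_of_lt hwb)
  have hbN : b ∈ P.N bot := mem_N_iff.mpr ⟨hlt, hgt⟩
  apply hCdep
  refine (indep_iff_matches hM hr C).mpr ⟨hCG.trans hGE, fun c => if c = b then bot else φ c,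
    ?_, ?_⟩
  · intro c₁ hc₁ c₂ hc₂ h12
    by_cases h1 : c₁ = b
    · have h2 : c₂ ≠ b := by
        intro h
        exact absurd h12 (by rw [h1, h]; exact lt_irrefl b)
      simp only [if_pos h1, if_neg h2]
      have hc₂T : c₂ ∈ insert w (C \ {b}) := mem_insert_of_mem _ ⟨hc₂, h2⟩
      exact lt_of_le_of_lt (hbot_le (φ w))
        (hφmono hwT hc₂T (lt_of_lt_of_le hwb (le_trans (hCb c₁ hc₁) (le_of_lt h12))))
    · have h2 : c₂ ≠ b := by
        intro h
        have := hCb c₁ hc₁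
        omega
      simp only [if_neg h1, if_neg h2]
      exact hφmono (mem_insert_of_mem _ ⟨hc₁, h1⟩) (mem_insert_of_mem _ ⟨hc₂, h2⟩) h12
  · intro c hc
    by_cases h : c = b
    · simp only [if_pos h]
      rw [h]
      exact hbN
    · simp only [if_neg h]
      exact hφmem c (mem_insert_of_mem _ ⟨hc, h⟩)

theorem core {P : LPP m r} {M₀ : Matroid ℕ} (hM : IsLPMOf P M₀)
    {F F' : Set ℕ}
    (hFE : F ⊆ M₀.E) (hF'E : F' ⊆ M₀.E)
    (hFdep : ¬ M₀.Indep F) (hF'dep : ¬ M₀.Indep F')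
    (hFflat : ∀ S ⊆ F, M₀.Indep S → ∀ w ∈ M₀.E \ F, M₀.Indep (insert w S))
    (hF'flat : ∀ S ⊆ F', M₀.Indep S → ∀ w ∈ M₀.E \ F', M₀.Indep (insert w S))
    (hFconn : ∀ p ∈ F, ∀ q ∈ F, p ≠ q →
      ∃ C ⊆ F, (¬ M₀.Indep C ∧ ∀ D ⊂ C, M₀.Indep D) ∧ p ∈ C ∧ q ∈ C)
    (hF'conn : ∀ p ∈ F', ∀ q ∈ F', p ≠ q →
      ∃ C ⊆ F', (¬ M₀.Indep C ∧ ∀ D ⊂ C, M₀.Indep D) ∧ p ∈ C ∧ q ∈ C)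
    (hmeet : (F ∩ F').Nonempty)
    (hspan : ∃ I ⊆ F ∪ F', M₀.Indep I ∧ I.ncard = r)
    (hproper : F ∪ F' ⊂ M₀.E) : False := by
  classical
  obtain ⟨e, heE, heU⟩ := Set.exists_of_ssubset hproper
  have heF : e ∉ F := fun h => heU (Or.inl h)
  have heF' : e ∉ F' := fun h => heU (Or.inr h)
  have hsing : M₀.Indep {e} := by
    have := hFflat ∅ (empty_subset F) M₀.empty_indep e ⟨heE, heF⟩
    simpa using this
  rcases Nat.eq_zero_or_pos r with hr0 | hr
  · obtain ⟨-, f0, -, -⟩ := (hM.2 {e}).mp hsing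
    subst hr0
    exact (f0 ⟨e, mem_singleton e⟩).elim0
  obtain ⟨I, hIU, hIind, hIcard⟩ := hspan
  have hUE : F ∪ F' ⊆ M₀.E := union_subset hFE hF'E
  have hUfin : (F ∪ F').Finite := by
    refine (Set.finite_Icc 1 (m + r)).subset ?_
    rw [← hM.1]
    exact hUE
  have hUne : (F ∪ F').Nonempty := hmeet.mono (inter_subset_left.trans subset_union_left)
  -- union is convex
  have hconvU : ∀ u ∈ F ∪ F', ∀ v ∈ F ∪ F', ∀ x ∈ M₀.E, u < x → x < v → x ∈ F ∪ F' := by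
    obtain ⟨p0, hp0F, hp0F'⟩ := hmeet
    intro u hu v hv x hx hux hxv
    have hF_case : ∀ a ∈ F, ∀ b ∈ F, a < x → x < b → x ∈ F ∪ F' :=
      fun a ha b hb h1 h2 => Or.inl (flat_convex hM hr hFE hFflat hFconn ha hb hx h1 h2)
    have hF'_case : ∀ a ∈ F', ∀ b ∈ F', a < x → x < b → x ∈ F ∪ F' :=
      fun a ha b hb h1 h2 => Or.inr (flat_convex hM hr hF'E hF'flat hF'conn ha hb hx h1 h2)
    rcases hu with hu | hu <;> rcases hv with hv | hv
    · exact hF_case u hu v hv hux hxv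
    · rcases lt_trichotomy x p0 with h | h | h
      · exact hF_case u hu p0 hp0F hux h
      · exact Or.inl (h ▸ hp0F)
      · exact hF'_case p0 hp0F' v hv h hxv
    · rcases lt_trichotomy x p0 with h | h | h
      · exact hF'_case u hu p0 hp0F' hux h
      · exact Or.inl (h ▸ hp0F)
      · exact hF_case p0 hp0F v hv h hxv
    · exact hF'_case u hu v hv hux hxv
  have hsplit : (∀ u ∈ F ∪ F', u < e) ∨ (∀ u ∈ F ∪ F', e < u) := by
    by_contra hcon
    push_neg at hcon
    obtain ⟨⟨u₁, hu₁, hu₁e⟩, u₂, hu₂, hu₂e⟩ := hcon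
    have h1 : e < u₁ := lt_of_le_of_ne hu₁e (fun h => heU (h ▸ hu₁))
    have h2 : u₂ < e := lt_of_le_of_ne hu₂e (fun h => heU (h.symm ▸ hu₂))
    exact heU (hconvU u₂ hu₂ u₁ hu₁ e heE h2 h1)
  -- a circuit through a point in a dependent "flat-like" set
  have getC : ∀ G : Set ℕ, ¬ M₀.Indep G →
      (∀ p ∈ G, ∀ q ∈ G, p ≠ q →
        ∃ C ⊆ G, (¬ M₀.Indep C ∧ ∀ D ⊂ C, M₀.Indep D) ∧ p ∈ C ∧ q ∈ C) →
      ∀ b ∈ G, ∃ C ⊆ G, b ∈ C ∧ ¬ M₀.Indep C ∧ ∀ D ⊂ C, M₀.Indep D := by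
    intro G hGdep hGconn b hbG
    by_cases hy : ∃ y₀ ∈ G, y₀ ≠ b
    · obtain ⟨y₀, hy₀, hne⟩ := hy
      obtain ⟨C, hCG, ⟨hd, hmin⟩, -, hbC⟩ := hGconn y₀ hy₀ b hbG hne
      exact ⟨C, hCG, hbC, hd, hmin⟩
    · push_neg at hy
      have hGb : G = {b} :=
        subset_antisymm (fun x hx => hy x hx) (singleton_subset_iff.mpr hbG)
      refine ⟨{b}, hGb ▸ subset_rfl, mem_singleton b, hGb ▸ hGdep, ?_⟩
      intro D hD
      rw [Set.ssubset_singleton_iff.mp hD]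
      exact M₀.empty_indep
  rcases hsplit with hhi | hlo
  · -- e is above everything : use the maximum of F ∪ F'
    obtain ⟨b, hbU, hbmax'⟩ := Set.Finite.exists_maximalFor id (F ∪ F') hUfin hUne
    have hbmax : ∀ u ∈ F ∪ F', u ≤ b := by
      intro u hu
      by_contra h
      push_neg at h
      have := hbmax' hu (le_of_lt h)
      simp only [id] at this
      omega
    have hbe : b < e := hhi b hbU
    have hIb : ∀ x ∈ I, x ≤ b := fun x hx => hbmax x (hIU hx)
    rcases hbU with hbF | hbF'
    · obtain ⟨C, hCG, hbC, hCdep, hCmin⟩ := getC F hFdep hFconn b hbF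
      exact lemR hM hr hFE hFflat hCG hbC hCdep hCmin
        (fun c hc => hbmax c (Or.inl (hCG hc))) heE (fun h => heU (Or.inl h)) hbe
        hIind hIcard hIb
    · obtain ⟨C, hCG, hbC, hCdep, hCmin⟩ := getC F' hF'dep hF'conn b hbF'
      exact lemR hM hr hF'E hF'flat hCG hbC hCdep hCmin
        (fun c hc => hbmax c (Or.inr (hCG hc))) heE (fun h => heU (Or.inr h)) hbe
        hIind hIcard hIb
  · -- e is below everything : use the minimum of F ∪ F'
    obtain ⟨b, hbU, hbmin'⟩ := Set.Finite.exists_minimalFor id (F ∪ F') hUfin hUne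
    have hbmin : ∀ u ∈ F ∪ F', b ≤ u := by
      intro u hu
      by_contra h
      push_neg at h
      have := hbmin' hu (le_of_lt h)
      simp only [id] at this
      omega
    have heb : e < b := hlo b hbU
    have hIb : ∀ x ∈ I, b ≤ x := fun x hx => hbmin x (hIU hx)
    rcases hbU with hbF | hbF'
    · obtain ⟨C, hCG, hbC, hCdep, hCmin⟩ := getC F hFdep hFconn b hbF
      exact lemL hM hr hFE hFflat hCG hbC hCdep hCmin
        (fun c hc => hbmin c (Or.inl (hCG hc))) heE (fun h => heU (Or.inl h)) heb
        hIind hIcard hIb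
    · obtain ⟨C, hCG, hbC, hCdep, hCmin⟩ := getC F' hF'dep hF'conn b hbF'
      exact lemL hM hr hF'E hF'flat hCG hbC hCdep hCmin
        (fun c hc => hbmin c (Or.inr (hCG hc))) heE (fun h => heU (Or.inr h)) heb
        hIind hIcard hIb


end LPM

open LPM in
/-- A finite matroid having two nontrivial connected flats
`X`, `X'` with `X ∩ X' ≠ ∅`, `r(X ∪ X') = r(M)`, and `X ∪ X' ⊊ E(M)` is not a
lattice path matroid. -/
theorem stmt16 {α : Type*} (M : Matroid α) (hfin : M.E.Finite)
    (X X' : Set α) (hX : NTConnFlat M X) (hX' : NTConnFlat M X')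
    (h1 : (X ∩ X').Nonempty)
    (h2 : rk M (X ∪ X') = rk M M.E)
    (h3 : X ∪ X' ⊂ M.E) :
    ¬ IsLPMatroid M := by
  rintro ⟨m, r, P, M₀, hM₀, f, hbij, hIff⟩
  classical
  have hXE : X ⊆ M.E := hX.1.subset_ground
  have hX'E : X' ⊆ M.E := hX'.1.subset_ground
  -- pulling back subsets of an image
  have hpull : ∀ (Z : Set α), Z ⊆ M.E → ∀ T ⊆ f '' Z, f '' {x ∈ Z | f x ∈ T} = T := by
    intro Z hZE T hT
    apply subset_antisymm
    · rintro _ ⟨x, hx, rfl⟩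
      exact hx.2
    · intro t ht
      obtain ⟨x, hxZ, rfl⟩ := hT ht
      exact ⟨x, ⟨hxZ, ht⟩, rfl⟩
  -- transfer of the flat property
  have flatlike : ∀ Z : Set α, M.IsFlat Z →
      ∀ S ⊆ f '' Z, M₀.Indep S → ∀ w ∈ M₀.E \ f '' Z, M₀.Indep (insert w S) := by
    intro Z hZ S hS hSind w hw
    set S₀ := {x ∈ Z | f x ∈ S} with hS₀def
    have hS₀Z : S₀ ⊆ Z := sep_subset _ _
    have himg : f '' S₀ = S := hpull Z hZ.subset_ground S hS
    have hS₀E : S₀ ⊆ M.E := hS₀Z.trans hZ.subset_ground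
    have hS₀ind : M.Indep S₀ := (hIff S₀ hS₀E).mpr (by rw [himg]; exact hSind)
    obtain ⟨v, hvE, rfl⟩ := hbij.surjOn hw.1
    have hvZ : v ∉ Z := fun hvZ => hw.2 ⟨v, hvZ, rfl⟩
    have hins : M.Indep (insert v S₀) := by
      rw [hS₀ind.insert_indep_iff]
      left
      refine ⟨hvE, fun hcl => ?_⟩
      have h2 : v ∈ M.closure Z := M.closure_mono hS₀Z hcl
      rw [hZ.closure] at h2
      exact hvZ h2
    have := (hIff _ (insert_subset hvE hS₀E)).mp hins
    rwa [image_insert_eq, himg] at this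
  -- transfer of connectivity (pairwise circuits)
  have conn : ∀ Z : Set α, Z ⊆ M.E → Connected (M ↾ Z) →
      ∀ p ∈ f '' Z, ∀ q ∈ f '' Z, p ≠ q →
        ∃ C ⊆ f '' Z, (¬ M₀.Indep C ∧ ∀ D ⊂ C, M₀.Indep D) ∧ p ∈ C ∧ q ∈ C := by
    intro Z hZE hc p hp q hq hpq
    obtain ⟨x, hxZ, rfl⟩ := hp
    obtain ⟨y, hyZ, rfl⟩ := hq
    have hxy : x ≠ y := fun h => hpq (h ▸ rfl)
    obtain ⟨C, ⟨hCE, hCdep, hCmin⟩, hxC, hyC⟩ := hc x hxZ y hyZ hxy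
    have hCZ : C ⊆ Z := hCE
    have hCdep' : ¬ M.Indep C := fun h => hCdep (Matroid.restrict_indep_iff.mpr ⟨h, hCZ⟩)
    refine ⟨f '' C, image_mono hCZ, ⟨?_, ?_⟩, ⟨x, hxC, rfl⟩, ⟨y, hyC, rfl⟩⟩
    · exact fun h => hCdep' ((hIff C (hCZ.trans hZE)).mpr h)
    · intro D hD
      set D₀ := {c ∈ C | f c ∈ D} with hD₀def
      have hD₀C : D₀ ⊆ C := sep_subset _ _
      have himg : f '' D₀ = D := hpull C (hCZ.trans hZE) D hD.subset
      have hss : D₀ ⊂ C := by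
        refine ⟨hD₀C, fun hsub => hD.2 ?_⟩
        intro t ht
        obtain ⟨c, hcC, rfl⟩ := ht
        rw [← himg]
        exact ⟨c, hsub hcC, rfl⟩
      have hind := (Matroid.restrict_indep_iff.mp (hCmin D₀ hss)).1
      rw [← himg]
      exact (hIff D₀ ((hD₀C.trans hCZ).trans hZE)).mp hind
  -- transfer of rank
  have hrk : ∀ W, W ⊆ M.E → rk M W = rk M₀ (f '' W) := by
    intro W hWE
    unfold rk
    congr 1
    ext n
    constructor
    · rintro ⟨I, hIW, hIind, rfl⟩
      refine ⟨f '' I, image_mono hIW, (hIff I (hIW.trans hWE)).mp hIind, ?_⟩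
      exact Set.ncard_image_of_injOn (hbij.injOn.mono (hIW.trans hWE))
    · rintro ⟨J, hJW, hJind, rfl⟩
      refine ⟨{x ∈ W | f x ∈ J}, sep_subset _ _, ?_, ?_⟩
      · refine (hIff _ ((sep_subset _ _).trans hWE)).mpr ?_
        rw [hpull W hWE J hJW]
        exact hJind
      · have h := Set.ncard_image_of_injOn
          (hbij.injOn.mono (((sep_subset W (f · ∈ J))).trans hWE))
        rw [hpull W hWE J hJW] at h
        exact h.symm
  -- every M₀-independent set has at most r elements
  have hub : ∀ J : Set ℕ, M₀.Indep J → J.ncard ≤ r := by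
    intro J hJ
    obtain ⟨hJsub, f0, hf0, -⟩ := (hM₀.2 J).mp hJ
    have h := Nat.card_le_card_of_injective f0 hf0
    rwa [Nat.card_coe_set_eq, Nat.card_eq_fintype_card, Fintype.card_fin] at h
  -- the rank of M₀ is r
  have hrkE : rk M₀ M₀.E = r := by
    have hmem : r ∈ {n | ∃ I, I ⊆ M₀.E ∧ M₀.Indep I ∧ I.ncard = n} := by
      refine ⟨Set.range P.l, ?_, ?_, ?_⟩
      · rw [hM₀.1]
        rintro _ ⟨i, rfl⟩
        exact ⟨P.one_le_l i, le_trans (P.l_le_g i) (P.g_le i)⟩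
      · refine (hM₀.2 _).mpr ⟨?_, ?_⟩
        · rw [hM₀.1] at *
          rintro _ ⟨i, rfl⟩
          exact ⟨P.one_le_l i, le_trans (P.l_le_g i) (P.g_le i)⟩
        · refine ⟨fun x => x.2.choose, ?_, ?_⟩
          · intro a b hab
            apply Subtype.ext
            rw [← a.2.choose_spec, ← b.2.choose_spec]
            exact congrArg P.l hab
          · intro x
            rw [mem_N_iff]
            constructor
            · exact le_of_eq x.2.choose_spec
            · calc (↑x : ℕ) = P.l x.2.choose := x.2.choose_spec.symm
                _ ≤ P.g x.2.choose := P.l_le_g _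
      · rw [← image_univ, Set.ncard_image_of_injOn (P.l_strictMono.injective.injOn),
          Set.ncard_univ, Nat.card_eq_fintype_card, Fintype.card_fin]
    have hubs : ∀ n ∈ {n | ∃ I, I ⊆ M₀.E ∧ M₀.Indep I ∧ I.ncard = n}, n ≤ r := by
      rintro n ⟨I, -, hIind, rfl⟩
      exact hub I hIind
    exact le_antisymm (csSup_le ⟨r, hmem⟩ hubs) (le_csSup ⟨r, hubs⟩ hmem)
  -- spanning witness in M₀
  have hspan : ∃ I ⊆ f '' X ∪ f '' X', M₀.Indep I ∧ I.ncard = r := by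
    have hXX'E : X ∪ X' ⊆ M.E := union_subset hXE hX'E
    have h2' : rk M₀ (f '' X ∪ f '' X') = r := by
      rw [← image_union, ← hrk _ hXX'E, h2, hrk M.E subset_rfl, hbij.image_eq, hrkE]
    have hne : {n | ∃ I, I ⊆ f '' X ∪ f '' X' ∧ M₀.Indep I ∧ I.ncard = n}.Nonempty :=
      ⟨0, ∅, empty_subset _, M₀.empty_indep, Set.ncard_empty ℕ⟩
    have hbdd : BddAbove {n | ∃ I, I ⊆ f '' X ∪ f '' X' ∧ M₀.Indep I ∧ I.ncard = n} := by
      refine ⟨r, ?_⟩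
      rintro n ⟨I, -, hIind, rfl⟩
      exact hub I hIind
    have := Nat.sSup_mem hne hbdd
    rw [show sSup {n | ∃ I, I ⊆ f '' X ∪ f '' X' ∧ M₀.Indep I ∧ I.ncard = n}
        = rk M₀ (f '' X ∪ f '' X') from rfl, h2'] at this
    obtain ⟨I, hIU, hIind, hIcard⟩ := this
    exact ⟨I, hIU, hIind, hIcard⟩
  -- proper subset transfer
  have hproper : f '' X ∪ f '' X' ⊂ M₀.E := by
    rw [← image_union]
    refine (Set.ssubset_iff_of_subset ?_).mpr ?_
    · intro t ht
      obtain ⟨x, hxU, rfl⟩ := ht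
      exact hbij.mapsTo (union_subset hXE hX'E hxU)
    · obtain ⟨eα, heE, heU⟩ := Set.exists_of_ssubset h3
      refine ⟨f eα, hbij.mapsTo heE, ?_⟩
      rintro ⟨u, huU, hu⟩
      exact heU (hbij.injOn (union_subset hXE hX'E huU) heE hu ▸ huU)
  -- dependence transfer
  have hFdep : ¬ M₀.Indep (f '' X) := fun h => hX.2.1 ((hIff X hXE).mpr h)
  have hF'dep : ¬ M₀.Indep (f '' X') := fun h => hX'.2.1 ((hIff X' hX'E).mpr h)
  -- ground subset transfer
  have hFE : f '' X ⊆ M₀.E := fun t ht => by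
    obtain ⟨x, hx, rfl⟩ := ht
    exact hbij.mapsTo (hXE hx)
  have hF'E : f '' X' ⊆ M₀.E := fun t ht => by
    obtain ⟨x, hx, rfl⟩ := ht
    exact hbij.mapsTo (hX'E hx)
  -- intersection transfer
  have hmeet : (f '' X ∩ f '' X').Nonempty := by
    obtain ⟨p, hpX, hpX'⟩ := h1
    exact ⟨f p, ⟨p, hpX, rfl⟩, ⟨p, hpX', rfl⟩⟩
  exact core hM₀ hFE hF'E hFdep hF'dep (flatlike X hX.1) (flatlike X' hX'.1)
    (conn X hXE hX.2.2) (conn X' hX'E hX'.2.2) hmeet hspan hproper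
end

section
/- A connected finite matroid M is a generalized Catalan matroid if and only if the nontrivial connected flats of M are linearly ordered by inclusion, i.e., for any two nontrivial connected flats F and F′ of M, either F ⊆ F′ or F′ ⊆ F. -/
open Set
open scoped Matroid

/-- A generalized Catalan matroid: a matroid isomorphic to `M[N]` for a lattice
path presentation with `g i = m + i` for all `i` (the lower bounding path is
`E^m N^r`); the case `r = 0` gives the rank-zero matroids. -/
def LPM.IsGCM {α : Type*} (M : Matroid α) : Prop :=
  ∃ (m r : ℕ) (P : LPM.LPP m r) (M₀ : Matroid ℕ),
    (∀ i : Fin r, P.g i = m + (i : ℕ) + 1) ∧ LPM.IsLPMOf P M₀ ∧ LPM.IsoTo M M₀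

namespace LPM

variable {α : Type*} {M : Matroid α} {C C₁ C₂ D I X F : Set α} {e x y : α}

lemma Circuit.dep (h : Circuit M C) : ¬ M.Indep C := h.2.1

lemma Circuit.subset_ground (h : Circuit M C) : C ⊆ M.E := h.1

lemma Circuit.ssubset_indep (h : Circuit M C) (hD : D ⊂ C) : M.Indep D := h.2.2 D hD

lemma Circuit.diff_singleton_indep (h : Circuit M C) (he : e ∈ C) : M.Indep (C \ {e}) :=
  h.ssubset_indep (Set.sdiff_singleton_ssubset.2 he)

lemma Circuit.nonempty (h : Circuit M C) : C.Nonempty := by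
  rcases C.eq_empty_or_nonempty with h0 | h0
  · exact absurd (h0 ▸ M.empty_indep) h.dep
  · exact h0

lemma exists_circuit_subset (hfin : M.E.Finite) (hX : X ⊆ M.E) (hdep : ¬ M.Indep X) :
    ∃ C ⊆ X, Circuit M C := by
  obtain ⟨C, ⟨hCX, hCdep⟩, hmin⟩ : ∃ C ∈ {D | D ⊆ X ∧ ¬ M.Indep D},
      ∀ D ∈ {D | D ⊆ X ∧ ¬ M.Indep D}, id D ≤ id C → id C = id D := by
    obtain ⟨C, hC⟩ := Set.Finite.exists_minimal
      (Set.Finite.sep (hfin.subset hX).finite_subsets (fun D => ¬ M.Indep D)) ⟨X, Subset.rfl, hdep⟩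
    exact ⟨C, hC.prop, fun D hD hDC => (hC.eq_of_le hD hDC).symm⟩
  refine ⟨C, hCX, hCX.trans hX, hCdep, fun D hD => ?_⟩
  by_contra hDdep
  have := hmin D ⟨hD.subset.trans hCX, hDdep⟩ hD.subset
  exact hD.ne this.symm

lemma flat_of_closure_subset (hF : F ⊆ M.E) (h : M.closure F ⊆ F) : M.IsFlat F := by
  refine ⟨fun I X hIF hIX => ?_, hF⟩
  have h2 : M.closure I = M.closure F := hIF.closure_eq_closure
  exact hIX.subset_closure.trans (h2 ▸ h)

lemma flat_iff_insert (hF : F ⊆ M.E) :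
    M.IsFlat F ↔ ∀ e ∈ M.E \ F, ∀ I ⊆ F, M.Indep I → M.Indep (insert e I) := by
  constructor
  · rintro hF' e he I hIF hI
    by_contra hdep
    have heI : e ∉ I := fun h' => hdep (by rwa [insert_eq_of_mem h'])
    have : e ∈ M.closure I := by
      have h2 := hI.insert_indep_iff_of_notMem heI
      rw [h2] at hdep
      simp only [mem_diff, he.1, true_and, not_not] at hdep
      exact hdep
    have : e ∈ F := by
      rw [← hF'.closure]
      exact M.closure_subset_closure hIF this
    exact he.2 this
  · rintro h
    refine flat_of_closure_subset hF fun e he => ?_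
    by_contra heF
    obtain ⟨I, hI⟩ := M.exists_isBasis F hF
    have heI : e ∉ I := fun h' => heF (hI.subset h')
    have hecl : e ∈ M.closure I := by rwa [hI.closure_eq_closure]
    have hind : M.Indep (insert e I) :=
      h e ⟨M.closure_subset_ground F he, heF⟩ I hI.subset hI.indep
    rw [hI.indep.mem_closure_iff_of_notMem heI] at hecl
    exact hecl.not_indep hind

end LPM

namespace LPM
variable {α : Type*} {M : Matroid α} {C C₁ C₂ D I X F : Set α} {e f x y z : α}

lemma Circuit.eq_of_subset (h₁ : Circuit M C₁) (h₂ : Circuit M C₂) (h : C₁ ⊆ C₂) : C₁ = C₂ := by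
  by_contra hne
  exact h₁.dep (h₂.ssubset_indep (ssubset_of_ne_of_subset hne h))

lemma weak_elim (hfin : M.E.Finite) (h₁ : Circuit M C₁) (h₂ : Circuit M C₂) (hne : C₁ ≠ C₂)
    (he : e ∈ C₁ ∩ C₂) : ¬ M.Indep ((C₁ ∪ C₂) \ {e}) := by
  intro hind
  set S := C₁ ∪ C₂ with hS
  have hSE : S ⊆ M.E := union_subset h₁.subset_ground h₂.subset_ground
  have hSfin : S.Finite := hfin.subset hSE
  have hIint : M.Indep (C₁ ∩ C₂) := by
    refine h₁.ssubset_indep (ssubset_of_ne_of_subset (fun hEq => ?_) inter_subset_left)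
    exact hne (h₁.eq_of_subset h₂ (by rw [← hEq]; exact inter_subset_right))
  obtain ⟨B, hB, hintB⟩ := hIint.subset_isBasis_of_subset
    (inter_subset_left.trans subset_union_left) hSE
  obtain ⟨a, haC₁, haB⟩ : ∃ a ∈ C₁, a ∉ B := by
    by_contra h'
    push_neg at h'
    exact h₁.dep (hB.indep.subset h')
  obtain ⟨b, hbC₂, hbB⟩ : ∃ b ∈ C₂, b ∉ B := by
    by_contra h'
    push_neg at h'
    exact h₂.dep (hB.indep.subset h')
  have haC₂ : a ∉ C₂ := fun h' => haB (hintB ⟨haC₁, h'⟩)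
  have hbC₁ : b ∉ C₁ := fun h' => hbB (hintB ⟨h', hbC₂⟩)
  have hab : a ≠ b := fun h' => haC₂ (h' ▸ hbC₂)
  have habS : {a, b} ⊆ S := by
    rintro t (rfl | rfl)
    · exact subset_union_left haC₁
    · exact subset_union_right hbC₂
  have hBsub : B ⊆ S \ {a, b} := by
    intro t ht
    refine ⟨hB.subset ht, ?_⟩
    rintro (rfl | rfl)
    · exact haB ht
    · exact hbB ht
  have hBcard : B.ncard ≤ S.ncard - 2 := by
    have := Set.ncard_le_ncard hBsub (hSfin.diff)
    rwa [Set.ncard_diff habS ((hSfin.subset habS)), Set.ncard_pair hab] at this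
  obtain ⟨B₂, hB₂, hsubB₂⟩ := hind.subset_isBasis_of_subset diff_subset hSE
  have hB₂card : S.ncard - 1 ≤ B₂.ncard := by
    have h1 : (S \ {e}).ncard ≤ B₂.ncard := Set.ncard_le_ncard hsubB₂ (hfin.subset hB₂.indep.subset_ground)
    have heS : e ∈ S := subset_union_left he.1
    rwa [Set.ncard_diff (singleton_subset_iff.2 heS) (Set.finite_singleton e), Set.ncard_singleton] at h1
  have hcardeq : B.ncard = B₂.ncard := by
    have := hB.encard_eq_encard hB₂
    rw [Set.ncard_def, Set.ncard_def, this]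
  have h2S : 2 ≤ S.ncard := (Set.one_lt_ncard hSfin).2 ⟨a, habS (by simp), b, habS (by simp), hab⟩
  omega

end LPM

namespace LPM
variable {α : Type*} {M : Matroid α} {C C₁ C₂ C₃ D I X F : Set α} {e f x y z : α}

lemma strong_elim (hfin : M.E.Finite) :
    ∀ n : ℕ, ∀ C₁ C₂ : Set α, ∀ e f : α, (C₁ ∪ C₂).ncard ≤ n →
      Circuit M C₁ → Circuit M C₂ → e ∈ C₁ ∩ C₂ → f ∈ C₁ \ C₂ →
      ∃ C₃, Circuit M C₃ ∧ f ∈ C₃ ∧ C₃ ⊆ (C₁ ∪ C₂) \ {e} := by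
  intro n
  induction n with
  | zero =>
    intro C₁ C₂ e f hcard h₁ h₂ he hf
    exfalso
    have h1 : (C₁ ∪ C₂).Finite :=
      hfin.subset (union_subset h₁.subset_ground h₂.subset_ground)
    have := Set.ncard_eq_zero h1 |>.1 (Nat.le_zero.1 hcard)
    rw [union_empty_iff] at this
    exact h₁.nonempty.ne_empty this.1
  | succ n IH =>
    intro C₁ C₂ e f hcard h₁ h₂ he hf
    have hSE : C₁ ∪ C₂ ⊆ M.E := union_subset h₁.subset_ground h₂.subset_ground
    have hSfin : (C₁ ∪ C₂).Finite := hfin.subset hSE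
    have hne : C₁ ≠ C₂ := fun h' => hf.2 (h' ▸ hf.1)
    obtain ⟨C, hCsub, hC⟩ := exists_circuit_subset hfin ((diff_subset).trans hSE)
      (weak_elim hfin h₁ h₂ hne he)
    by_cases hfC : f ∈ C
    · exact ⟨C, hC, hfC, hCsub⟩
    have heC : e ∉ C := fun h' => (hCsub h').2 rfl
    obtain ⟨g, hgC, hgC₁⟩ : ∃ g ∈ C, g ∉ C₁ := by
      by_contra h'
      push_neg at h'
      exact heC ((hC.eq_of_subset h₁ h') ▸ he.1)
    have hgC₂ : g ∈ C₂ := ((hCsub hgC).1.resolve_left hgC₁)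
    -- first recursive call : circuits C₂ and C, common elt g, keep e
    have hmeas1 : (C₂ ∪ C).ncard ≤ n := by
      have hsub : C₂ ∪ C ⊆ C₁ ∪ C₂ := union_subset subset_union_right
        (hCsub.trans diff_subset)
      have hstrict : (C₂ ∪ C).ncard < (C₁ ∪ C₂).ncard := by
        refine Set.ncard_lt_ncard ⟨hsub, fun hss => ?_⟩ hSfin
        have := hss (subset_union_left hf.1)
        rcases this with h' | h'
        · exact hf.2 h'
        · exact hfC h'
      omega
    obtain ⟨C₄, hC₄, heC₄, hC₄sub⟩ := IH C₂ C g e hmeas1 h₂ hC ⟨hgC₂, hgC⟩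
      ⟨he.2, heC⟩
    -- second recursive call : circuits C₁ and C₄, common elt e, keep f
    have hC₄S : C₄ ⊆ C₁ ∪ C₂ := hC₄sub.trans (diff_subset.trans (union_subset
      subset_union_right (hCsub.trans diff_subset)))
    have hgC₄ : g ∉ C₄ := fun h' => (hC₄sub h').2 rfl
    have hfC₄ : f ∉ C₄ := fun h' => by
      rcases (hC₄sub h').1 with h'' | h''
      · exact hf.2 h''
      · exact hfC h''
    have hmeas2 : (C₁ ∪ C₄).ncard ≤ n := by
      have hsub : C₁ ∪ C₄ ⊆ C₁ ∪ C₂ := union_subset subset_union_left hC₄S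
      have hstrict : (C₁ ∪ C₄).ncard < (C₁ ∪ C₂).ncard := by
        refine Set.ncard_lt_ncard ⟨hsub, fun hss => ?_⟩ hSfin
        have := hss (subset_union_right hgC₂)
        rcases this with h' | h'
        · exact hgC₁ h'
        · exact hgC₄ h'
      omega
    obtain ⟨C₅, hC₅, hfC₅, hC₅sub⟩ := IH C₁ C₄ e f hmeas2 h₁ hC₄ ⟨he.1, heC₄⟩
      ⟨hf.1, hfC₄⟩
    refine ⟨C₅, hC₅, hfC₅, hC₅sub.trans ?_⟩
    intro t ht
    exact ⟨(union_subset subset_union_left hC₄S) ht.1, ht.2⟩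

end LPM

namespace LPM
variable {α : Type*} {M : Matroid α} {C C₁ C₂ C₃ D I X F : Set α} {e f x y z : α}

lemma circuit_trans_aux (hfin : M.E.Finite) :
    ∀ n : ℕ, ∀ C₁ C₂ : Set α, ∀ x z : α, (C₁ ∪ C₂).ncard ≤ n →
      Circuit M C₁ → Circuit M C₂ → x ∈ C₁ → z ∈ C₂ → (C₁ ∩ C₂).Nonempty →
      ∃ C, Circuit M C ∧ x ∈ C ∧ z ∈ C := by
  intro n
  induction n with
  | zero =>
    intro C₁ C₂ x z hcard h₁ h₂ hx hz hint
    exfalso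
    have h1 : (C₁ ∪ C₂).Finite :=
      hfin.subset (union_subset h₁.subset_ground h₂.subset_ground)
    have := Set.ncard_eq_zero h1 |>.1 (Nat.le_zero.1 hcard)
    rw [union_empty_iff] at this
    exact h₁.nonempty.ne_empty this.1
  | succ n IH =>
    intro C₁ C₂ x z hcard h₁ h₂ hx hz hint
    by_cases hzC₁ : z ∈ C₁
    · exact ⟨C₁, h₁, hx, hzC₁⟩
    by_cases hxC₂ : x ∈ C₂
    · exact ⟨C₂, h₂, hxC₂, hz⟩
    obtain ⟨e, he⟩ := hint
    have hSE : C₁ ∪ C₂ ⊆ M.E := union_subset h₁.subset_ground h₂.subset_ground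
    have hSfin : (C₁ ∪ C₂).Finite := hfin.subset hSE
    -- C₃ : circuit containing x avoiding e
    obtain ⟨C₃, hC₃, hxC₃, hC₃sub⟩ :=
      strong_elim hfin ((C₁ ∪ C₂).ncard) C₁ C₂ e x le_rfl h₁ h₂ he ⟨hx, hxC₂⟩
    by_cases hzC₃ : z ∈ C₃
    · exact ⟨C₃, hC₃, hxC₃, hzC₃⟩
    have heC₃ : e ∉ C₃ := fun h' => (hC₃sub h').2 rfl
    obtain ⟨g, hgC₃, hgC₁⟩ : ∃ g ∈ C₃, g ∉ C₁ := by
      by_contra h'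
      push_neg at h'
      exact heC₃ ((hC₃.eq_of_subset h₁ h') ▸ he.1)
    have hgC₂ : g ∈ C₂ := ((hC₃sub hgC₃).1.resolve_left hgC₁)
    have hC₃S : C₃ ⊆ C₁ ∪ C₂ := hC₃sub.trans diff_subset
    -- case split on whether C₃ ∪ C₂ is smaller
    by_cases hsmall : (C₃ ∪ C₂).ncard ≤ n
    · exact IH C₃ C₂ x z hsmall hC₃ h₂ hxC₃ hz ⟨g, hgC₃, hgC₂⟩
    -- otherwise C₃ ∪ C₂ = C₁ ∪ C₂
    have hequnion : C₃ ∪ C₂ = C₁ ∪ C₂ := by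
      refine Set.eq_of_subset_of_ncard_le (union_subset hC₃S subset_union_right) ?_ hSfin
      omega
    -- strong elim on C₂, C₃ with common g, keep z
    obtain ⟨C₄, hC₄, hzC₄, hC₄sub⟩ :=
      strong_elim hfin ((C₂ ∪ C₃).ncard) C₂ C₃ g z le_rfl h₂ hC₃ ⟨hgC₂, hgC₃⟩ ⟨hz, hzC₃⟩
    by_cases hxC₄ : x ∈ C₄
    · exact ⟨C₄, hC₄, hxC₄, hzC₄⟩
    have hgC₄ : g ∉ C₄ := fun h' => (hC₄sub h').2 rfl
    have hC₄S : C₄ ⊆ C₁ ∪ C₂ := by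
      refine hC₄sub.trans (diff_subset.trans ?_)
      rw [union_comm C₂ C₃]
      exact hequnion.le
    -- C₄ meets C₁
    have hC₄C₁ : (C₁ ∩ C₄).Nonempty := by
      by_contra h'
      rw [Set.not_nonempty_iff_eq_empty] at h'
      have hsubC₂ : C₄ ⊆ C₂ := by
        intro t ht
        rcases hC₄S ht with h'' | h''
        · exfalso
          have hmem : t ∈ C₁ ∩ C₄ := ⟨h'', ht⟩
          rw [h'] at hmem
          exact hmem
        · exact h''
      have := hC₄.eq_of_subset h₂ hsubC₂
      exact hgC₄ (this ▸ hgC₂)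
    have hmeas : (C₁ ∪ C₄).ncard ≤ n := by
      have hsub : C₁ ∪ C₄ ⊆ C₁ ∪ C₂ := union_subset subset_union_left hC₄S
      have hstrict : (C₁ ∪ C₄).ncard < (C₁ ∪ C₂).ncard := by
        refine Set.ncard_lt_ncard ⟨hsub, fun hss => ?_⟩ hSfin
        rcases hss (subset_union_right hgC₂) with h' | h'
        · exact hgC₁ h'
        · exact hgC₄ h'
      omega
    exact IH C₁ C₄ x z hmeas h₁ hC₄ hx hzC₄ hC₄C₁

lemma circuit_trans (hfin : M.E.Finite) (h₁ : Circuit M C₁) (h₂ : Circuit M C₂)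
    (hx : x ∈ C₁) (hz : z ∈ C₂) (hint : (C₁ ∩ C₂).Nonempty) :
    ∃ C, Circuit M C ∧ x ∈ C ∧ z ∈ C :=
  circuit_trans_aux hfin ((C₁ ∪ C₂).ncard) C₁ C₂ x z le_rfl h₁ h₂ hx hz hint

end LPM

namespace LPM
variable {α : Type*} {M : Matroid α} {C C₁ C₂ C₃ D I J R X X' F : Set α} {e f x y z : α}

lemma circuit_restrict_iff (hR : R ⊆ M.E) : Circuit (M ↾ R) C ↔ Circuit M C ∧ C ⊆ R := by
  constructor
  · rintro ⟨hCR, hdep, hmin⟩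
    rw [Matroid.restrict_ground_eq] at hCR
    refine ⟨⟨hCR.trans hR, fun hI => hdep (Matroid.restrict_indep_iff.2 ⟨hI, hCR⟩), fun D hD => ?_⟩, hCR⟩
    exact (Matroid.restrict_indep_iff.1 (hmin D hD)).1
  · rintro ⟨⟨hCE, hdep, hmin⟩, hCR⟩
    refine ⟨by rwa [Matroid.restrict_ground_eq], fun hI => hdep (Matroid.restrict_indep_iff.1 hI).1,
      fun D hD => Matroid.restrict_indep_iff.2 ⟨hmin D hD, hD.subset.trans hCR⟩⟩

section rk

lemma rk_set_nonempty (M : Matroid α) (X : Set α) :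
    {n | ∃ I, I ⊆ X ∧ M.Indep I ∧ I.ncard = n}.Nonempty :=
  ⟨0, ∅, empty_subset X, M.empty_indep, Set.ncard_empty α⟩

lemma rk_set_bddAbove (hfin : M.E.Finite) (hX : X ⊆ M.E) :
    BddAbove {n | ∃ I, I ⊆ X ∧ M.Indep I ∧ I.ncard = n} := by
  refine ⟨X.ncard, ?_⟩
  rintro n ⟨I, hIX, _, rfl⟩
  exact Set.ncard_le_ncard hIX (hfin.subset hX)

lemma ncard_le_rk (hfin : M.E.Finite) (hX : X ⊆ M.E) (hIX : I ⊆ X) (hI : M.Indep I) :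
    I.ncard ≤ rk M X :=
  le_csSup (rk_set_bddAbove hfin hX) ⟨I, hIX, hI, rfl⟩

lemma exists_rk_attained (hfin : M.E.Finite) (hX : X ⊆ M.E) :
    ∃ I, I ⊆ X ∧ M.Indep I ∧ I.ncard = rk M X :=
  Nat.sSup_mem (rk_set_nonempty M X) (rk_set_bddAbove hfin hX)

lemma rk_le (hfin : M.E.Finite) (hX : X ⊆ M.E) {b : ℕ}
    (hb : ∀ I, I ⊆ X → M.Indep I → I.ncard ≤ b) : rk M X ≤ b := by
  refine csSup_le (rk_set_nonempty M X) ?_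
  rintro n ⟨I, hIX, hI, rfl⟩
  exact hb I hIX hI

lemma rk_le_ncard (hfin : M.E.Finite) (hX : X ⊆ M.E) : rk M X ≤ X.ncard :=
  rk_le hfin hX fun I hIX _ => Set.ncard_le_ncard hIX (hfin.subset hX)

lemma rk_le_rk_add_diff (hfin : M.E.Finite) (hXX' : X ⊆ X') (hX' : X' ⊆ M.E) :
    rk M X' ≤ rk M X + (X' \ X).ncard := by
  obtain ⟨I, hIX', hI, hIcard⟩ := exists_rk_attained hfin hX'
  rw [← hIcard]
  have hIfin : I.Finite := hfin.subset (hI.subset_ground)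
  have hsplit : I.ncard = (I ∩ X).ncard + (I \ X).ncard := by
    rw [← Set.ncard_inter_add_ncard_diff_eq_ncard I X hIfin]
  rw [hsplit]
  have h1 : (I ∩ X).ncard ≤ rk M X :=
    ncard_le_rk hfin (hXX'.trans hX') inter_subset_right (hI.subset inter_subset_left)
  have h2 : (I \ X).ncard ≤ (X' \ X).ncard :=
    Set.ncard_le_ncard (diff_subset_diff_left hIX') ((hfin.subset hX').diff)
  omega

lemma indep_ncard_le_of_subset_closure (hfin : M.E.Finite) (hJ : M.Indep J) (hI : M.Indep I)
    (hJI : J ⊆ M.closure I) : J.ncard ≤ I.ncard := by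
  obtain ⟨B, hB, hJB⟩ := hJ.subset_isBasis_of_subset hJI (M.closure_subset_ground I)
  have h1 : J.ncard ≤ B.ncard := Set.ncard_le_ncard hJB (hfin.subset hB.indep.subset_ground)
  have h2 : B.ncard = I.ncard := by
    have := hB.encard_eq_encard hI.isBasis_closure
    rw [Set.ncard_def, Set.ncard_def, this]
  omega

end rk

end LPM

namespace LPM
variable {α : Type*} {M : Matroid α} {C C₁ C₂ C₃ D I J R X X' F : Set α} {e f x y z : α}

lemma exists_ntconnflat (hfin : M.E.Finite) (hloopless : ∀ e ∈ M.E, M.Indep {e})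
    (hX : X ⊆ M.E) (hdep : ¬ M.Indep X) :
    ∃ F, NTConnFlat M F ∧ rk M F < (X ∩ F).ncard := by
  obtain ⟨C, hCX, hC⟩ := exists_circuit_subset hfin hX hdep
  obtain ⟨c₁, hc₁⟩ := hC.nonempty
  set G := M.closure C with hGdef
  have hCE : C ⊆ M.E := hC.subset_ground
  have hCG : C ⊆ G := M.subset_closure C hCE
  have hGE : G ⊆ M.E := M.closure_subset_ground C
  have hGfin : G.Finite := hfin.subset hGE
  have hNfin : (M ↾ G).E.Finite := by rwa [Matroid.restrict_ground_eq]
  set shares : α → α → Prop := fun a b => ∃ D, Circuit M D ∧ D ⊆ G ∧ a ∈ D ∧ b ∈ D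
    with hshares
  have hsymm : ∀ a b, shares a b → shares b a := by
    rintro a b ⟨D, h1, h2, h3, h4⟩; exact ⟨D, h1, h2, h4, h3⟩
  have htrans : ∀ a b c, shares a b → shares b c → shares a c := by
    rintro a b c ⟨D₁, hD₁, hD₁G, haD₁, hbD₁⟩ ⟨D₂, hD₂, hD₂G, hbD₂, hcD₂⟩
    obtain ⟨D, hD, haD, hcD⟩ := circuit_trans (M := M ↾ G) hNfin
      ((circuit_restrict_iff hGE).2 ⟨hD₁, hD₁G⟩) ((circuit_restrict_iff hGE).2 ⟨hD₂, hD₂G⟩)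
      haD₁ hcD₂ ⟨b, hbD₁, hbD₂⟩
    obtain ⟨hD', hDG⟩ := (circuit_restrict_iff hGE).1 hD
    exact ⟨D, hD', hDG, haD, hcD⟩
  set F := {y | y ∈ G ∧ (y = c₁ ∨ shares c₁ y)} with hFdef
  have hFG : F ⊆ G := fun y hy => hy.1
  have hFE : F ⊆ M.E := hFG.trans hGE
  have hCF : C ⊆ F := fun y hy => ⟨hCG hy, Or.inr ⟨C, hC, hCG, hc₁, hy⟩⟩
  have hFfin : F.Finite := hfin.subset hFE
  have hshared_in_F : ∀ a ∈ F, ∀ D, Circuit M D → D ⊆ G → a ∈ D → D ⊆ F := by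
    rintro a haF D hD hDG haD d hd
    have had : shares a d := ⟨D, hD, hDG, haD, hd⟩
    rcases haF.2 with rfl | hca
    · exact ⟨hDG hd, Or.inr had⟩
    · exact ⟨hDG hd, Or.inr (htrans c₁ a d hca had)⟩
  have hFdep : ¬ M.Indep F := fun h => hC.dep (h.subset hCF)
  have hconnF : Connected (M ↾ F) := by
    rintro a haF b hbF hab
    rw [Matroid.restrict_ground_eq] at haF hbF
    have hshab : shares a b := by
      rcases haF.2 with rfl | hca
      · rcases hbF.2 with rfl | hcb
        · exact absurd rfl hab
        · exact hcb
      · rcases hbF.2 with rfl | hcb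
        · exact hsymm _ _ hca
        · exact htrans a c₁ b (hsymm _ _ hca) hcb
    obtain ⟨D, hD, hDG, haD, hbD⟩ := hshab
    have hDF : D ⊆ F := hshared_in_F a haF D hD hDG haD
    exact ⟨D, (circuit_restrict_iff hFE).2 ⟨hD, hDF⟩, haD, hbD⟩
  have hFlat : M.IsFlat F := by
    rw [flat_iff_insert hFE]
    rintro e he I hIF hI
    by_contra hdep'
    have heI : e ∉ I := fun h' => hdep' (by rwa [insert_eq_of_mem h'])
    have hins : insert e I ⊆ M.E := insert_subset he.1 (hIF.trans hFE)
    obtain ⟨D, hDsub, hD⟩ := exists_circuit_subset hfin hins hdep'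
    have heD : e ∈ D := by
      by_contra heD
      have : D ⊆ I := fun t ht => ((hDsub ht).resolve_left (fun h' => heD (h' ▸ ht)))
      exact hD.dep (hI.subset this)
    obtain ⟨d, hdD, hde⟩ : ∃ d ∈ D, d ≠ e := by
      by_contra h'
      push_neg at h'
      have : D = {e} := Set.eq_singleton_iff_unique_mem.2 ⟨heD, h'⟩
      exact hD.dep (this ▸ hloopless e he.1)
    have hdI : d ∈ I := (hDsub hdD).resolve_left hde
    have heG : e ∈ G := by
      have h1 : M.Indep (D \ {e}) := hD.diff_singleton_indep heD
      have h2 : e ∈ M.closure (D \ {e}) := by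
        rw [h1.mem_closure_iff_of_notMem (fun h' => h'.2 rfl)]
        rw [Set.insert_diff_singleton, insert_eq_of_mem heD]
        exact ⟨hD.dep, hD.subset_ground⟩
      have h3 : D \ {e} ⊆ F := fun t ht => hIF ((hDsub ht.1).resolve_left (fun h' => ht.2 (by rw [h']; rfl)))
      have h4 : M.closure (D \ {e}) ⊆ M.closure G := M.closure_subset_closure (h3.trans hFG)
      rw [hGdef, Matroid.closure_closure] at h4
      exact h4 h2
    have hDG : D ⊆ G := by
      intro t ht
      rcases hDsub ht with rfl | htI
      · exact heG
      · exact hFG (hIF htI)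
    have : D ⊆ F := hshared_in_F d (hIF hdI) D hD hDG hdD
    exact he.2 (this heD)
  -- rank bound
  have hclCc : M.closure (C \ {c₁}) = G := by
    have h1 : M.Indep (C \ {c₁}) := hC.diff_singleton_indep hc₁
    have h2 : c₁ ∈ M.closure (C \ {c₁}) := by
      rw [h1.mem_closure_iff_of_notMem (fun h' => h'.2 rfl)]
      rw [Set.insert_diff_singleton, insert_eq_of_mem hc₁]
      exact ⟨hC.dep, hC.subset_ground⟩
    have := Matroid.closure_insert_eq_of_mem_closure h2
    rw [Set.insert_diff_singleton, insert_eq_of_mem hc₁] at this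
    exact this.symm
  have hrk : rk M F ≤ (C \ {c₁}).ncard := by
    refine rk_le hfin hFE fun I hIF hI => ?_
    refine indep_ncard_le_of_subset_closure hfin hI (hC.diff_singleton_indep hc₁) ?_
    rw [hclCc]
    exact hIF.trans hFG
  have hCcard : (C \ {c₁}).ncard = C.ncard - 1 := by
    rw [Set.ncard_diff (singleton_subset_iff.2 hc₁) (Set.finite_singleton c₁), Set.ncard_singleton]
  have hC1 : 1 ≤ C.ncard := Set.ncard_pos (hfin.subset hCE) |>.2 hC.nonempty
  have hXF : C.ncard ≤ (X ∩ F).ncard :=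
    Set.ncard_le_ncard (subset_inter hCX hCF) ((hfin.subset hX).inter_of_left F)
  exact ⟨F, ⟨hFlat, hFdep, hconnF⟩, by omega⟩

end LPM

namespace LPM

variable {m r : ℕ} {P : LPP m r} {I : Set ℕ}

lemma ncard_fin_lt (r t : ℕ) : {i : Fin r | (i : ℕ) < t}.ncard = min t r := by
  rw [← Set.ncard_image_of_injective _ (Fin.val_injective)]
  have himg : (fun i : Fin r => (i : ℕ)) '' {i : Fin r | (i : ℕ) < t} = Set.Ico 0 (min t r) := by
    ext n
    simp only [Set.mem_image, Set.mem_setOf_eq, Set.mem_Ico, Nat.zero_le, true_and,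
      lt_min_iff]
    constructor
    · rintro ⟨i, hi, rfl⟩; exact ⟨hi, i.isLt⟩
    · rintro ⟨h1, h2⟩; exact ⟨⟨n, h2⟩, h1, rfl⟩
  rw [himg, ← Finset.coe_Ico, Set.ncard_coe_finset, Nat.card_Ico, Nat.sub_zero]

/-- The profile function of a presentation: the number of intervals whose left endpoint
is at most `t`. -/
noncomputable def tauP (P : LPP m r) (t : ℕ) : ℕ := {i : Fin r | P.l i ≤ t}.ncard

lemma tauP_mono {t t' : ℕ} (h : t ≤ t') : tauP P t ≤ tauP P t' :=
  Set.ncard_le_ncard (fun i hi => le_trans hi h) (Set.toFinite _)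

lemma tauP_le (t : ℕ) : tauP P t ≤ r := by
  have := Set.ncard_le_ncard (Set.subset_univ {i : Fin r | P.l i ≤ t}) (Set.finite_univ)
  rwa [Set.ncard_univ, Nat.card_eq_fintype_card, Fintype.card_fin] at this

lemma pt_counting (hPT : IsPT P.N I) (t : ℕ) : (I ∩ Set.Icc 1 t).ncard ≤ tauP P t := by
  obtain ⟨f, hinj, hmem⟩ := hPT
  rcases (I ∩ Set.Icc 1 t).eq_empty_or_nonempty with h0 | ⟨x₀, hx₀⟩
  · simp [h0, tauP]
  have : Nonempty (Fin r) := ⟨f ⟨x₀, hx₀.1⟩⟩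
  classical
  set g : ℕ → Fin r := fun x => if h : x ∈ I then f ⟨x, h⟩ else Classical.arbitrary _ with hg
  refine Set.ncard_le_ncard_of_injOn g ?_ ?_ (Set.toFinite _)
  · rintro x ⟨hxI, hx1, hxt⟩
    simp only [hg, dif_pos hxI]
    have := hmem ⟨x, hxI⟩
    exact le_trans this.1 hxt
  · rintro x ⟨hxI, _⟩ y ⟨hyI, _⟩ hxy
    simp only [hg, dif_pos hxI, dif_pos hyI] at hxy
    exact congrArg Subtype.val (hinj hxy)

lemma counting_pt (hg : ∀ i, P.g i = m + (i : ℕ) + 1) (hI : I ⊆ Set.Icc 1 (m + r))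
    (hcount : ∀ t, (I ∩ Set.Icc 1 t).ncard ≤ tauP P t) : IsPT P.N I := by
  classical
  have hIfin : I.Finite := (Set.finite_Icc 1 (m + r)).subset hI
  set s : Finset ℕ := hIfin.toFinset with hs
  set k := s.card with hk
  have hIcard : I.ncard = k := Set.ncard_eq_toFinset_card I hIfin
  have hkr : k ≤ r := by
    have h1 := hcount (m + r)
    rw [Set.inter_eq_left.2 hI] at h1
    exact le_trans (hIcard ▸ h1) (tauP_le _)
  set e := s.orderIsoOfFin rfl with he
  have hmem_s : ∀ x : I, (x : ℕ) ∈ s := fun x => hIfin.mem_toFinset.2 x.2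
  set pos : I → Fin k := fun x => e.symm ⟨(x : ℕ), hmem_s x⟩ with hpos
  have hepos : ∀ x : I, ((e (pos x) : ℕ)) = (x : ℕ) := fun x => by
    simp [hpos]
  have hpos_lt : ∀ x y : I, (x : ℕ) < (y : ℕ) → (pos x : ℕ) < (pos y : ℕ) := by
    intro x y hxy
    have h2 : (⟨(x : ℕ), hmem_s x⟩ : s) < ⟨(y : ℕ), hmem_s y⟩ := Subtype.mk_lt_mk.2 hxy
    exact e.symm.lt_iff_lt.2 h2
  -- the assignment
  have hub : ∀ x : I, (x : ℕ) ≤ m + r := fun x => (hI x.2).2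
  have hlb : ∀ x : I, 1 ≤ (x : ℕ) := fun x => (hI x.2).1
  have hridx : ∀ x : I, max ((pos x : ℕ)) ((x : ℕ) - (m + 1)) < r := by
    intro x
    have h1 : (pos x : ℕ) < k := (pos x).isLt
    have h2 := hub x
    have h3 : 0 < r := lt_of_lt_of_le (lt_of_le_of_lt (Nat.zero_le _) h1) hkr
    omega
  set f : I → Fin r := fun x => ⟨max ((pos x : ℕ)) ((x : ℕ) - (m + 1)), hridx x⟩ with hf
  -- key: lower bounds hold
  have hlow : ∀ x : I, P.l (f x) ≤ (x : ℕ) := by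
    intro x
    rcases max_cases ((pos x : ℕ)) ((x : ℕ) - (m + 1)) with ⟨hmax, hle⟩ | ⟨hmax, hlt⟩
    · -- f x = pos x
      by_contra hcon
      push_neg at hcon
      have hfx : (f x : ℕ) = (pos x : ℕ) := by rw [hf]; exact hmax
      -- the elements in positions 0..pos x are all ≤ x and in I
      have hsub : (fun i : Fin k => ((e i : ℕ))) '' {i : Fin k | (i : ℕ) ≤ (pos x : ℕ)}
          ⊆ I ∩ Set.Icc 1 (x : ℕ) := by
        rintro t ⟨i, hi, rfl⟩
        have hti : ((e i : ℕ)) ∈ I := hIfin.mem_toFinset.1 (e i).2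
        refine ⟨hti, (hI hti).1, ?_⟩
        have : e i ≤ e (pos x) := e.le_iff_le.2 (Fin.le_def.2 hi)
        calc ((e i : ℕ)) ≤ ((e (pos x) : ℕ)) := this
          _ = (x : ℕ) := hepos x
      have hcard1 : (pos x : ℕ) + 1 ≤ ((fun i : Fin k => ((e i : ℕ))) ''
          {i : Fin k | (i : ℕ) ≤ (pos x : ℕ)}).ncard := by
        rw [Set.ncard_image_of_injective _ (fun a b hab => e.injective (Subtype.ext hab))]
        have : {i : Fin k | (i : ℕ) ≤ (pos x : ℕ)} = {i : Fin k | (i : ℕ) < (pos x : ℕ) + 1} := by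
          ext i; simp [Nat.lt_succ_iff]
        rw [this, ncard_fin_lt]
        have : (pos x : ℕ) + 1 ≤ k := (pos x).isLt
        omega
      have hcard2 : (I ∩ Set.Icc 1 (x : ℕ)).ncard ≤ (pos x : ℕ) := by
        refine le_trans (hcount (x : ℕ)) ?_
        have hsub2 : {i : Fin r | P.l i ≤ (x : ℕ)} ⊆ {i : Fin r | (i : ℕ) < (f x : ℕ)} := by
          intro i hi
          simp only [Set.mem_setOf_eq] at hi ⊢
          by_contra hge
          push_neg at hge
          have : P.l (f x) ≤ P.l i := P.l_strictMono.monotone (Fin.le_def.2 hge)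
          omega
        refine le_trans (Set.ncard_le_ncard hsub2 (Set.toFinite _)) ?_
        rw [ncard_fin_lt, hfx]
        exact min_le_left _ _
      have := le_trans hcard1 (le_trans (Set.ncard_le_ncard hsub
        (hIfin.inter_of_left _)) hcard2)
      omega
    · -- f x = x - (m+1), and pos x < x - (m+1), so x ≥ m + 2
      have hfx : (f x : ℕ) = (x : ℕ) - (m + 1) := by rw [hf]; exact hmax
      have hx2 : m + 2 ≤ (x : ℕ) := by omega
      have := P.l_le_g (f x)
      rw [hg (f x), hfx] at this
      omega
  refine ⟨f, ?_, ?_⟩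
  · intro x y hxy
    by_contra hne
    have hvalne : (x : ℕ) ≠ (y : ℕ) := fun h => hne (Subtype.ext h)
    have hfeq : (f x : ℕ) = (f y : ℕ) := by rw [hxy]
    rcases lt_or_gt_of_ne hvalne with hlt | hlt
    · have h1 := hpos_lt x y hlt
      have : (f x : ℕ) < (f y : ℕ) := by
        simp only [hf]
        have : (x : ℕ) < (y : ℕ) := hlt
        omega
      omega
    · have h1 := hpos_lt y x hlt
      have : (f y : ℕ) < (f x : ℕ) := by
        simp only [hf]
        have : (y : ℕ) < (x : ℕ) := hlt
        omega
      omega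
  · intro x
    refine ⟨hlow x, ?_⟩
    rw [hg (f x)]
    have : (x : ℕ) - (m + 1) ≤ (f x : ℕ) := by simp [hf]
    omega

end LPM

namespace LPM
variable {m r : ℕ} {P : LPP m r} {M₀ : Matroid ℕ} {I F F' : Set ℕ} {x y : ℕ}

lemma IsLPMOf.indep_iff_counting (hP : IsLPMOf P M₀) (hg : ∀ i, P.g i = m + (i : ℕ) + 1) :
    ∀ I : Set ℕ, M₀.Indep I ↔ I ⊆ Set.Icc 1 (m + r) ∧
      ∀ t, (I ∩ Set.Icc 1 t).ncard ≤ tauP P t := by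
  intro I
  rw [hP.2 I]
  constructor
  · rintro ⟨h1, h2⟩
    exact ⟨h1, fun t => pt_counting h2 t⟩
  · rintro ⟨h1, h2⟩
    exact ⟨h1, counting_pt hg h1 h2⟩

lemma IsLPMOf.finite_ground (hP : IsLPMOf P M₀) : M₀.E.Finite := by
  rw [hP.1]; exact Set.finite_Icc _ _

lemma lpm_ntcf_downward (hP : IsLPMOf P M₀) (hg : ∀ i, P.g i = m + (i : ℕ) + 1)
    (hF : NTConnFlat M₀ F) (hx : x ∈ M₀.E) (hy : y ∈ F) (hxy : x ≤ y) : x ∈ F := by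
  by_contra hxF
  have hFE : F ⊆ M₀.E := hF.1.subset_ground
  have hxlt : x < y := lt_of_le_of_ne hxy (fun h => hxF (h ▸ hy))
  -- find a circuit C ⊆ F containing an element w with x < w
  obtain ⟨C, hC, hCF, w, hwC, hxw⟩ :
      ∃ C, Circuit M₀ C ∧ C ⊆ F ∧ ∃ w ∈ C, x < w := by
    by_cases hsing : ∃ z ∈ F, z ≠ y
    · obtain ⟨z, hzF, hzy⟩ := hsing
      obtain ⟨D, hD, hyD, hzD⟩ := hF.2.2 y (by rwa [Matroid.restrict_ground_eq]) z
        (by rwa [Matroid.restrict_ground_eq]) (Ne.symm hzy)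
      obtain ⟨hD', hDF⟩ := (circuit_restrict_iff hFE).1 hD
      exact ⟨D, hD', hDF, y, hyD, hxlt⟩
    · push_neg at hsing
      have hFy : F = {y} := Set.eq_singleton_iff_unique_mem.2 ⟨hy, hsing⟩
      refine ⟨{y}, ⟨by rw [← hFy]; exact hFE, by rw [← hFy]; exact hF.2.1, fun D hD => ?_⟩,
        by rw [hFy], y, rfl, hxlt⟩
      rw [Set.ssubset_singleton_iff.1 hD]
      exact M₀.empty_indep
  -- counting violation for C
  have hCE : C ⊆ Set.Icc 1 (m + r) := by rw [← hP.1]; exact hC.subset_ground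
  obtain ⟨t, ht⟩ : ∃ t, tauP P t < (C ∩ Set.Icc 1 t).ncard := by
    by_contra h'
    push_neg at h'
    exact hC.dep ((hP.indep_iff_counting hg C).2 ⟨hCE, fun t => h' t⟩)
  have hCt : C ⊆ Set.Icc 1 t := by
    rintro c hc
    refine ⟨(hCE hc).1, ?_⟩
    by_contra hct
    push_neg at hct
    have hproper : C ∩ Set.Icc 1 t ⊂ C := by
      refine ⟨Set.inter_subset_left, fun hss => ?_⟩
      have := (hss hc).2.2
      omega
    have hind := hC.ssubset_indep hproper
    have h2 := pt_counting ((hP.2 _).1 hind).2 t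
    rw [Set.inter_assoc, Set.inter_self] at h2
    omega
  rw [Set.inter_eq_left.2 hCt] at ht
  -- the swapped set
  have hxC : x ∉ C := fun h => hxF (hCF h)
  set C' := insert x (C \ {w}) with hC'
  have hfinC : C.Finite := (Set.finite_Icc 1 t).subset hCt
  have hcardC' : C'.ncard = C.ncard := by
    rw [hC', Set.ncard_insert_of_notMem (fun h => hxC h.1) (hfinC.diff),
      Set.ncard_diff (Set.singleton_subset_iff.2 hwC) (Set.finite_singleton w),
      Set.ncard_singleton]
    have : 1 ≤ C.ncard := Set.ncard_pos hfinC |>.2 ⟨w, hwC⟩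
    omega
  have hC't : C' ⊆ Set.Icc 1 t := by
    rintro c (rfl | hc)
    · rcases hP.1 ▸ hx with ⟨h1, _⟩
      exact ⟨h1, le_trans (le_of_lt hxw) (hCt hwC).2⟩
    · exact hCt hc.1
  have hdepC' : ¬ M₀.Indep C' := by
    intro hind
    have h2 := pt_counting ((hP.2 _).1 hind).2 t
    rw [Set.inter_eq_left.2 hC't, hcardC'] at h2
    omega
  -- contradiction with flatness
  have hCwF : C \ {w} ⊆ F := (Set.diff_subset).trans hCF
  have hCwind : M₀.Indep (C \ {w}) := hC.diff_singleton_indep hwC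
  have := (flat_iff_insert hFE).1 hF.1 x ⟨hx, hxF⟩ (C \ {w}) hCwF hCwind
  exact hdepC' this

lemma lpm_ntcf_comparable (hP : IsLPMOf P M₀) (hg : ∀ i, P.g i = m + (i : ℕ) + 1)
    (hF : NTConnFlat M₀ F) (hF' : NTConnFlat M₀ F') : F ⊆ F' ∨ F' ⊆ F := by
  by_contra h'
  push_neg at h'
  obtain ⟨⟨a, haF, haF'⟩, b, hbF', hbF⟩ : (∃ a ∈ F, a ∉ F') ∧ ∃ b ∈ F', b ∉ F := by
    constructor
    · rcases Set.not_subset.1 h'.1 with ⟨a, h1, h2⟩; exact ⟨a, h1, h2⟩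
    · rcases Set.not_subset.1 h'.2 with ⟨b, h1, h2⟩; exact ⟨b, h1, h2⟩
  rcases le_total a b with hab | hab
  · exact haF' (lpm_ntcf_downward hP hg hF' (hF.1.subset_ground haF) hbF' hab)
  · exact hbF (lpm_ntcf_downward hP hg hF (hF'.1.subset_ground hbF') haF hab)

end LPM

namespace LPM
section iso
variable {α β : Type*} {M : Matroid α} {M' : Matroid β} {f : α → β} {C D F I X : Set α}

lemma image_repr (hbij : Set.BijOn f M.E M'.E) (hX : X ⊆ M.E) {I' : Set β} (hI' : I' ⊆ f '' X) :
    ∃ I, I ⊆ X ∧ f '' I = I' := by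
  refine ⟨f ⁻¹' I' ∩ X, Set.inter_subset_right, ?_⟩
  apply Set.Subset.antisymm
  · rintro t ⟨a, ⟨ha1, _⟩, rfl⟩
    exact ha1
  · rintro t ht
    obtain ⟨a, haX, rfl⟩ := hI' ht
    exact ⟨a, ⟨ht, haX⟩, rfl⟩

lemma iso_indep_iff (hbij : Set.BijOn f M.E M'.E)
    (hind : ∀ I ⊆ M.E, (M.Indep I ↔ M'.Indep (f '' I))) (hIE : I ⊆ M.E) :
    (M.Indep I ↔ M'.Indep (f '' I)) := hind I hIE

lemma iso_circuit_fwd (hbij : Set.BijOn f M.E M'.E)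
    (hind : ∀ I ⊆ M.E, (M.Indep I ↔ M'.Indep (f '' I))) (hC : Circuit M C) :
    Circuit M' (f '' C) := by
  have hCE : C ⊆ M.E := hC.subset_ground
  refine ⟨(Set.image_mono hCE).trans hbij.mapsTo.image_subset, fun h => hC.dep ((hind C hCE).2 h), ?_⟩
  intro D' hD'
  obtain ⟨D, hDC, rfl⟩ := image_repr hbij hCE hD'.subset
  have hDC' : D ⊂ C := by
    refine ⟨hDC, fun hss => hD'.ne ?_⟩
    exact congrArg (Set.image f) (Set.Subset.antisymm hDC hss)
  exact (hind D (hDC.trans hCE)).1 (hC.ssubset_indep hDC')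

lemma iso_connected_fwd (hbij : Set.BijOn f M.E M'.E)
    (hind : ∀ I ⊆ M.E, (M.Indep I ↔ M'.Indep (f '' I))) (hFE : F ⊆ M.E)
    (hconn : Connected (M ↾ F)) : Connected (M' ↾ (f '' F)) := by
  have hFE' : f '' F ⊆ M'.E := (Set.image_mono hFE).trans hbij.mapsTo.image_subset
  rintro x' hx' y' hy' hne
  rw [Matroid.restrict_ground_eq] at hx' hy'
  obtain ⟨x, hxF, rfl⟩ := hx'
  obtain ⟨y, hyF, rfl⟩ := hy'
  have hxy : x ≠ y := fun h => hne (congrArg f h)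
  obtain ⟨D, hD, hxD, hyD⟩ := hconn x (by rwa [Matroid.restrict_ground_eq]) y
    (by rwa [Matroid.restrict_ground_eq]) hxy
  obtain ⟨hD', hDF⟩ := (circuit_restrict_iff hFE).1 hD
  refine ⟨f '' D, (circuit_restrict_iff hFE').2
    ⟨iso_circuit_fwd hbij hind hD', Set.image_mono hDF⟩, ⟨x, hxD, rfl⟩, ⟨y, hyD, rfl⟩⟩

lemma iso_flat_fwd (hbij : Set.BijOn f M.E M'.E)
    (hind : ∀ I ⊆ M.E, (M.Indep I ↔ M'.Indep (f '' I))) (hF : M.IsFlat F) :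
    M'.IsFlat (f '' F) := by
  have hFE : F ⊆ M.E := hF.subset_ground
  have hFE' : f '' F ⊆ M'.E := (Set.image_mono hFE).trans hbij.mapsTo.image_subset
  rw [flat_iff_insert hFE']
  rintro e' ⟨he'E, he'F⟩ I' hI'F hI'
  obtain ⟨e, heE, rfl⟩ := hbij.surjOn he'E
  have heF : e ∉ F := fun h => he'F ⟨e, h, rfl⟩
  obtain ⟨I, hIF, rfl⟩ := image_repr hbij hFE hI'F
  have hI : M.Indep I := (hind I (hIF.trans hFE)).2 hI'
  have hins : M.Indep (insert e I) :=
    (flat_iff_insert hFE).1 hF e ⟨heE, heF⟩ I hIF hI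
  have := (hind (insert e I) (Set.insert_subset heE (hIF.trans hFE))).1 hins
  rwa [Set.image_insert_eq] at this

lemma iso_ntcf_fwd (hbij : Set.BijOn f M.E M'.E)
    (hind : ∀ I ⊆ M.E, (M.Indep I ↔ M'.Indep (f '' I))) (hF : NTConnFlat M F) :
    NTConnFlat M' (f '' F) :=
  ⟨iso_flat_fwd hbij hind hF.1,
   fun h => hF.2.1 ((hind F hF.1.subset_ground).2 h),
   iso_connected_fwd hbij hind hF.1.subset_ground hF.2.2⟩

end iso
end LPM

namespace LPM
variable {α : Type*} {M : Matroid α}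

lemma image_repr' {β : Type*} {f : α → β} {X : Set α} {I' : Set β} (hI' : I' ⊆ f '' X) :
    ∃ I, I ⊆ X ∧ f '' I = I' := by
  refine ⟨f ⁻¹' I' ∩ X, Set.inter_subset_right, ?_⟩
  apply Set.Subset.antisymm
  · rintro t ⟨a, ⟨ha1, _⟩, rfl⟩
    exact ha1
  · rintro t ht
    obtain ⟨a, haX, rfl⟩ := hI' ht
    exact ⟨a, ⟨ht, haX⟩, rfl⟩

/-- The trivial presentation with rank 0 and nullity m. -/
def trivLPP (m : ℕ) : LPP m 0 where
  l := Fin.elim0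
  g := Fin.elim0
  l_strictMono := fun i => i.elim0
  g_strictMono := fun i => i.elim0
  one_le_l := fun i => i.elim0
  l_le_g := fun i => i.elim0
  g_le := fun i => i.elim0

/-- The free presentation with rank 1 and nullity 0. -/
def freeLPP : LPP 0 1 where
  l := fun _ => 1
  g := fun _ => 1
  l_strictMono := Subsingleton.strictMono _
  g_strictMono := Subsingleton.strictMono _
  one_le_l := fun _ => le_refl 1
  l_le_g := fun _ => le_refl 1
  g_le := fun _ => le_refl 1

lemma isPT_empty {ι : Type*} (N : ι → Set ℕ) : IsPT N (∅ : Set ℕ) := by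
  refine ⟨fun x => absurd x.2 (Set.notMem_empty _), ?_, ?_⟩
  · rintro ⟨x, hx⟩
    exact absurd hx (Set.notMem_empty _)
  · rintro ⟨x, hx⟩
    exact absurd hx (Set.notMem_empty _)

lemma gcm_emptyOn (h : M.E = ∅) : IsGCM M := by
  refine ⟨0, 0, trivLPP 0, Matroid.emptyOn ℕ, fun i => i.elim0, ⟨by simp, fun I => ?_⟩,
    fun _ => 0, ?_, fun I hI => ?_⟩
  · simp only [Matroid.emptyOn_indep_iff]
    constructor
    · rintro rfl
      exact ⟨by simp, isPT_empty _⟩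
    · rintro ⟨hsub, f, _, _⟩
      rcases Set.eq_empty_or_nonempty I with rfl | ⟨x, hx⟩
      · rfl
      · exact absurd (f ⟨x, hx⟩).isLt (by omega)
  · rw [h]
    simp [Set.BijOn]
  · rw [h, Set.subset_empty_iff] at hI
    subst hI
    simp [M.empty_indep]

lemma gcm_loop {a : α} (h : M.E = {a}) (hdep : ¬ M.Indep {a}) : IsGCM M := by
  refine ⟨1, 0, trivLPP 1, Matroid.loopyOn {1}, fun i => i.elim0,
    ⟨by simp [Set.Icc_self], fun I => ?_⟩, fun _ => 1, ?_, fun I hI => ?_⟩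
  · simp only [Matroid.loopyOn_indep_iff]
    constructor
    · rintro rfl
      exact ⟨by simp, isPT_empty _⟩
    · rintro ⟨hsub, f, _, _⟩
      rcases Set.eq_empty_or_nonempty I with rfl | ⟨x, hx⟩
      · rfl
      · exact absurd (f ⟨x, hx⟩).isLt (by omega)
  · rw [h]
    simp only [Matroid.loopyOn_ground]
    constructor
    · rintro x rfl; simp [Set.Icc_self]
    · refine ⟨fun x hx y hy _ => hx.trans hy.symm, ?_⟩
      rintro x hx
      simp only [Set.Icc_self, Set.mem_singleton_iff] at hx
      exact ⟨a, rfl, hx.symm⟩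
  · rw [h] at hI
    rcases Set.subset_singleton_iff_eq.1 hI with rfl | rfl
    · simp [M.empty_indep]
    · simp only [Matroid.loopyOn_indep_iff, Set.image_singleton]
      constructor
      · intro h'; exact absurd h' hdep
      · intro h'; exact absurd h' (Set.singleton_ne_empty 1)

lemma gcm_free_single {a : α} (h : M.E = {a}) (hind : M.Indep {a}) : IsGCM M := by
  have hpt : ∀ I : Set ℕ, I ⊆ Set.Icc 1 1 → IsPT (freeLPP.N) I := by
    intro I hI
    rcases Set.subset_singleton_iff_eq.1 (by simpa [Set.Icc_self] using hI) with rfl | rfl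
    · exact isPT_empty _
    · refine ⟨fun _ => 0, fun x y _ => ?_, ?_⟩
      · have hx := x.2
        have hy := y.2
        simp only [Set.mem_singleton_iff] at hx hy
        exact Subtype.ext (hx.trans hy.symm)
      · rintro ⟨x, hx⟩
        simp only [Set.mem_singleton_iff] at hx
        subst hx
        simp [freeLPP, LPP.N]
  refine ⟨0, 1, freeLPP, Matroid.freeOn {1}, fun i => by simp [freeLPP], ⟨by simp [Set.Icc_self], fun I => ?_⟩,
    fun _ => 1, ?_, fun I hI => ?_⟩
  · simp only [Matroid.freeOn_indep_iff]
    constructor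
    · intro hsub
      exact ⟨by simpa [Set.Icc_self] using hsub, hpt I (by simpa [Set.Icc_self] using hsub)⟩
    · rintro ⟨hsub, _⟩
      simpa [Set.Icc_self] using hsub
  · rw [h]
    simp only [Matroid.freeOn_ground]
    constructor
    · rintro x rfl; simp
    · refine ⟨fun x hx y hy _ => hx.trans hy.symm, ?_⟩
      rintro x hx
      simp only [Set.mem_singleton_iff] at hx
      exact ⟨a, rfl, hx.symm⟩
  · rw [h] at hI
    rcases Set.subset_singleton_iff_eq.1 hI with rfl | rfl
    · simp [M.empty_indep]
    · simp only [Matroid.freeOn_indep_iff, Set.image_singleton]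
      simp [hind]

end LPM

namespace LPM
variable {α : Type*} {M : Matroid α}

lemma gcm_of_chain (hfin : M.E.Finite) (hconn : Connected M)
    (hchain : ∀ F F' : Set α, NTConnFlat M F → NTConnFlat M F' → F ⊆ F' ∨ F' ⊆ F) :
    IsGCM M := by
  classical
  by_cases hE2 : ∃ x ∈ M.E, ∃ y ∈ M.E, x ≠ y
  swap
  · -- small ground set
    push_neg at hE2
    rcases Set.eq_empty_or_nonempty M.E with hE | ⟨a, ha⟩
    · exact gcm_emptyOn hE
    have hEa : M.E = {a} := Set.eq_singleton_iff_unique_mem.2 ⟨ha, fun x hx => by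
      by_contra hne
      exact hne (hE2 x hx a ha)⟩
    by_cases hind : M.Indep {a}
    · exact gcm_free_single hEa hind
    · exact gcm_loop hEa hind
  obtain ⟨x₀, hx₀, y₀, hy₀, hxy₀⟩ := hE2
  -- ground set is dependent, M is loopless
  obtain ⟨C₀, hC₀, _, _⟩ := hconn x₀ hx₀ y₀ hy₀ hxy₀
  have hEdep : ¬ M.Indep M.E := fun h => hC₀.dep (h.subset hC₀.subset_ground)
  have hloopless : ∀ e ∈ M.E, M.Indep {e} := by
    intro e he
    obtain ⟨z, hz, hze⟩ : ∃ z ∈ M.E, z ≠ e := by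
      by_cases h' : x₀ = e
      · exact ⟨y₀, hy₀, fun h'' => hxy₀ (h'.trans h''.symm)⟩
      · exact ⟨x₀, hx₀, h'⟩
    obtain ⟨C, hC, heC, hzC⟩ := hconn e he z hz (Ne.symm hze)
    refine hC.ssubset_indep ⟨Set.singleton_subset_iff.2 heC, fun hss => hze ?_⟩
    have := hss hzC
    simpa using this
  -- basic quantities
  set n := M.E.ncard with hn
  set r := rk M M.E with hr
  have hrn : r ≤ n := rk_le_ncard hfin Subset.rfl
  set m := n - r with hm
  have hmr : m + r = n := by omega
  have hEntcf : NTConnFlat M M.E :=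
    ⟨M.ground_isFlat, hEdep, by rwa [Matroid.restrict_ground_eq_self]⟩
  have hntcf_subset : ∀ F : Set α, NTConnFlat M F → F ⊆ M.E := fun F hF => hF.1.subset_ground
  have h𝒞fin : {F | NTConnFlat M F}.Finite :=
    hfin.finite_subsets.subset (fun F hF => hntcf_subset F hF)
  -- minimal ntcf containing a point
  have hmin : ∀ a ∈ M.E, NTConnFlat M (⋂₀ {F | NTConnFlat M F ∧ a ∈ F}) ∧
      a ∈ (⋂₀ {F | NTConnFlat M F ∧ a ∈ F}) ∧
      ∀ F, NTConnFlat M F → a ∈ F → (⋂₀ {F | NTConnFlat M F ∧ a ∈ F}) ⊆ F := by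
    intro a ha
    have hSne : (⋂₀ {F | NTConnFlat M F ∧ a ∈ F} ∈ {F | NTConnFlat M F ∧ a ∈ F}) := by
      obtain ⟨F₀, hF₀, hF₀min⟩ : ∃ F₀ ∈ {F ∈ {F | NTConnFlat M F} | a ∈ F},
          ∀ F ∈ {F ∈ {F | NTConnFlat M F} | a ∈ F}, id F ≤ id F₀ → id F₀ = id F := by
        obtain ⟨F₀, hF₀⟩ := Set.Finite.exists_minimal
          (h𝒞fin.sep (fun F => a ∈ F)) ⟨M.E, hEntcf, ha⟩
        exact ⟨F₀, hF₀.prop, fun F hF hFF => (hF₀.eq_of_le hF hFF).symm⟩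
      have : ⋂₀ {F | NTConnFlat M F ∧ a ∈ F} = F₀ := by
        apply Set.Subset.antisymm (Set.sInter_subset_of_mem hF₀)
        refine Set.subset_sInter fun F hF => ?_
        rcases hchain F₀ F hF₀.1 hF.1 with h' | h'
        · exact h'
        · have := hF₀min F hF h'
          simp only [id] at this
          rw [← this]
      rw [this]
      exact hF₀
    exact ⟨hSne.1, hSne.2, fun F hF haF => Set.sInter_subset_of_mem ⟨hF, haF⟩⟩
  -- the key function
  set ψ : α → ℕ := fun a => (⋂₀ {F | NTConnFlat M F ∧ a ∈ F}).ncard with hψ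
  set sE : Finset α := hfin.toFinset with hsE
  have hsEcard : sE.card = n := (Set.ncard_eq_toFinset_card M.E hfin).symm
  set tie : α → ℕ := fun a => if h : a ∈ sE then ((sE.equivFin ⟨a, h⟩ : Fin sE.card) : ℕ) else 0
    with htie
  have htie_lt : ∀ a ∈ M.E, tie a < n := by
    intro a ha
    have h' : a ∈ sE := hfin.mem_toFinset.2 ha
    simp only [htie, dif_pos h']
    rw [← hsEcard]
    exact (sE.equivFin ⟨a, h'⟩).isLt
  have htie_inj : ∀ a ∈ M.E, ∀ b ∈ M.E, tie a = tie b → a = b := by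
    intro a ha b hb hab
    have h'a : a ∈ sE := hfin.mem_toFinset.2 ha
    have h'b : b ∈ sE := hfin.mem_toFinset.2 hb
    simp only [htie, dif_pos h'a, dif_pos h'b] at hab
    have := sE.equivFin.injective (Fin.val_injective hab)
    exact congrArg Subtype.val this
  set κ : α → ℕ := fun a => ψ a * (n + 1) + tie a with hκ
  have hκinj : ∀ a ∈ M.E, ∀ b ∈ M.E, κ a = κ b → a = b := by
    intro a ha b hb hab
    simp only [hκ] at hab
    have h1 := htie_lt a ha
    have h2 := htie_lt b hb
    have hψab : ψ a = ψ b := by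
      by_contra hne'
      rcases lt_or_gt_of_ne hne' with h' | h'
      · have hx : ψ a * (n+1) + (n+1) ≤ ψ b * (n+1) := by
          have := Nat.mul_le_mul_right (n+1) (Nat.succ_le_of_lt h')
          rwa [Nat.succ_mul] at this
        omega
      · have hx : ψ b * (n+1) + (n+1) ≤ ψ a * (n+1) := by
          have := Nat.mul_le_mul_right (n+1) (Nat.succ_le_of_lt h')
          rwa [Nat.succ_mul] at this
        omega
    rw [hψab] at hab
    have : tie a = tie b := by omega
    exact htie_inj a ha b hb this
  have hκord : ∀ F, NTConnFlat M F → ∀ a ∈ F, ∀ b ∈ M.E \ F, κ a < κ b := by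
    rintro F hF a haF b ⟨hbE, hbF⟩
    have haE : a ∈ M.E := hntcf_subset F hF haF
    have h1 : ψ a ≤ F.ncard :=
      Set.ncard_le_ncard ((hmin a haE).2.2 F hF haF) (hfin.subset (hntcf_subset F hF))
    have h2 : F.ncard < ψ b := by
      obtain ⟨hFb, hbFb, _⟩ := hmin b hbE
      have hsub : F ⊆ ⋂₀ {F' | NTConnFlat M F' ∧ b ∈ F'} := by
        rcases hchain F _ hF hFb with h' | h'
        · exact h'
        · exact absurd (h' hbFb) hbF
      have hproper : F ≠ ⋂₀ {F' | NTConnFlat M F' ∧ b ∈ F'} := fun h' => hbF (h' ▸ hbFb)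
      exact Set.ncard_lt_ncard (ssubset_of_ne_of_subset hproper hsub)
        (hfin.subset (hntcf_subset _ hFb))
    have h3 := htie_lt a haE
    have hx : ψ a * (n+1) + (n+1) ≤ ψ b * (n+1) := by
      have := Nat.mul_le_mul_right (n+1) (Nat.succ_le_of_lt (lt_of_le_of_lt h1 h2))
      rwa [Nat.succ_mul] at this
    simp only [hκ]
    omega
  set φ : α → ℕ := fun a => 1 + {b ∈ M.E | κ b < κ a}.ncard with hφ
  have hφmono : ∀ a ∈ M.E, ∀ b ∈ M.E, κ a < κ b → φ a < φ b := by
    intro a ha b hb hab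
    simp only [hφ]
    have hsub : {c ∈ M.E | κ c < κ a} ⊂ {c ∈ M.E | κ c < κ b} := by
      refine ⟨fun c hc => ⟨hc.1, lt_trans hc.2 hab⟩, fun hss => ?_⟩
      exact absurd (hss ⟨ha, hab⟩).2 (lt_irrefl _)
    have := Set.ncard_lt_ncard hsub (hfin.sep _)
    omega
  have hφinj : Set.InjOn φ M.E := by
    intro a ha b hb hab
    by_contra hne
    have : κ a ≠ κ b := fun h => hne (hκinj a ha b hb h)
    rcases lt_or_gt_of_ne this with h' | h'
    · exact absurd hab (Nat.ne_of_lt (hφmono a ha b hb h'))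
    · exact absurd hab.symm (Nat.ne_of_lt (hφmono b hb a ha h'))
  have hφIcc : ∀ a ∈ M.E, φ a ∈ Set.Icc 1 n := by
    intro a ha
    refine ⟨by simp [hφ], ?_⟩
    have hsub : {b ∈ M.E | κ b < κ a} ⊆ M.E \ {a} := by
      rintro b ⟨hbE, hb⟩
      exact ⟨hbE, fun h' => absurd hb (by rw [h']; exact lt_irrefl _)⟩
    have h1 := Set.ncard_le_ncard hsub (hfin.diff)
    have h2 : (M.E \ {a}).ncard = n - 1 := by
      rw [Set.ncard_diff (Set.singleton_subset_iff.2 ha) (Set.finite_singleton a),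
        Set.ncard_singleton]
    have h3 : 1 ≤ n := Set.ncard_pos hfin |>.2 ⟨a, ha⟩
    simp only [hφ]
    omega
  have hIccCard : ∀ k : ℕ, (Set.Icc 1 k).ncard = k := by
    intro k
    rw [← Finset.coe_Icc, Set.ncard_coe_finset, Nat.card_Icc]
    omega
  have himg : φ '' M.E = Set.Icc 1 n := by
    refine Set.eq_of_subset_of_ncard_le ?_ ?_ (Set.finite_Icc 1 n)
    · rintro t ⟨a, ha, rfl⟩
      exact hφIcc a ha
    · rw [hIccCard, Set.ncard_image_of_injOn hφinj]
  have hφmemF : ∀ F, NTConnFlat M F → ∀ a ∈ M.E, (φ a ≤ F.ncard ↔ a ∈ F) := by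
    intro F hF a ha
    constructor
    · intro h'
      by_contra haF
      have hsub : F ⊆ {b ∈ M.E | κ b < κ a} := fun b hbF =>
        ⟨hntcf_subset F hF hbF, hκord F hF b hbF a ⟨ha, haF⟩⟩
      have := Set.ncard_le_ncard hsub (hfin.sep _)
      simp only [hφ] at h'
      omega
    · intro haF
      have hsub : {b ∈ M.E | κ b < κ a} ⊆ F \ {a} := by
        rintro b ⟨hbE, hb⟩
        by_cases hbF : b ∈ F
        · exact ⟨hbF, fun h' => absurd hb (by rw [h']; exact lt_irrefl _)⟩
        · exact absurd hb (not_lt.2 (le_of_lt (hκord F hF a haF b ⟨hbE, hbF⟩)))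
      have h1 := Set.ncard_le_ncard hsub ((hfin.subset (hntcf_subset F hF)).diff)
      have h2 : (F \ {a}).ncard = F.ncard - 1 := by
        rw [Set.ncard_diff (Set.singleton_subset_iff.2 haF) (Set.finite_singleton a),
          Set.ncard_singleton]
      have h3 : 1 ≤ F.ncard := Set.ncard_pos (hfin.subset (hntcf_subset F hF)) |>.2 ⟨a, haF⟩
      simp only [hφ]
      omega
  have himgF : ∀ F, NTConnFlat M F → φ '' F = Set.Icc 1 F.ncard := by
    intro F hF
    have hFfin : F.Finite := hfin.subset (hntcf_subset F hF)
    refine Set.eq_of_subset_of_ncard_le ?_ ?_ (Set.finite_Icc _ _)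
    · rintro t ⟨a, haF, rfl⟩
      exact ⟨(hφIcc a (hntcf_subset F hF haF)).1,
        (hφmemF F hF a (hntcf_subset F hF haF)).2 haF⟩
    · rw [hIccCard, Set.ncard_image_of_injOn (hφinj.mono (hntcf_subset F hF))]
  -- the tau function
  set 𝒞fin : Finset (Set α) := h𝒞fin.toFinset with h𝒞fin'
  have hmem𝒞 : ∀ F : Set α, F ∈ 𝒞fin ↔ NTConnFlat M F := fun F => h𝒞fin.mem_toFinset
  have hne𝒞 : 𝒞fin.Nonempty := ⟨M.E, (hmem𝒞 _).2 hEntcf⟩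
  set τ : ℕ → ℕ := fun c => min c (𝒞fin.inf' hne𝒞 fun F => rk M F + (c - F.ncard)) with hτ
  have hranks : ∀ F, NTConnFlat M F → r + F.ncard ≤ rk M F + n := by
    intro F hF
    have hFE := hntcf_subset F hF
    have h1 : rk M M.E ≤ rk M F + (M.E \ F).ncard := rk_le_rk_add_diff hfin hFE Subset.rfl
    have h2 : (M.E \ F).ncard = n - F.ncard := by
      rw [Set.ncard_diff hFE (hfin.subset hFE)]
    have h3 : F.ncard ≤ n := Set.ncard_le_ncard hFE hfin
    omega
  have ht_le_c : ∀ c, τ c ≤ c := fun c => min_le_left _ _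
  have ht_le_term : ∀ c, ∀ F, NTConnFlat M F → τ c ≤ rk M F + (c - F.ncard) := by
    intro c F hF
    exact le_trans (min_le_right _ _) (Finset.inf'_le _ ((hmem𝒞 F).2 hF))
  have ht_cases : ∀ c, τ c = c ∨ ∃ F, NTConnFlat M F ∧ τ c = rk M F + (c - F.ncard) := by
    intro c
    rcases min_cases c (𝒞fin.inf' hne𝒞 fun F => rk M F + (c - F.ncard)) with ⟨h1, _⟩ | ⟨h1, _⟩
    · exact Or.inl h1
    · obtain ⟨F, hFmem, hFeq⟩ := Finset.exists_mem_eq_inf' hne𝒞 (fun F => rk M F + (c - F.ncard))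
      exact Or.inr ⟨F, (hmem𝒞 F).1 hFmem, by rw [hτ]; simp only; omega⟩
  have hτmono : ∀ c c' : ℕ, c ≤ c' → τ c ≤ τ c' := by
    intro c c' hcc
    rcases ht_cases c' with h' | ⟨F, hF, h'⟩
    · rw [h']
      exact le_trans (ht_le_c c) hcc
    · rw [h']
      refine le_trans (ht_le_term c F hF) ?_
      omega
  have hτstep : ∀ c : ℕ, τ (c + 1) ≤ τ c + 1 := by
    intro c
    rcases ht_cases c with h' | ⟨F, hF, h'⟩
    · exact le_trans (ht_le_c (c+1)) (by omega)
    · refine le_trans (ht_le_term (c+1) F hF) ?_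
      omega
  have hτn : τ n = r := by
    apply le_antisymm
    · refine le_trans (ht_le_term n M.E hEntcf) ?_
      simp [← hr, ← hn]
    · refine le_min hrn (Finset.le_inf' hne𝒞 _ fun F hFm => ?_)
      have := hranks F ((hmem𝒞 F).1 hFm)
      have h3 : F.ncard ≤ n := Set.ncard_le_ncard (hntcf_subset F ((hmem𝒞 F).1 hFm)) hfin
      omega
  have hτgap : ∀ c, c ≤ n → c + r ≤ τ c + n := by
    intro c hc
    rcases ht_cases c with h' | ⟨F, hF, h'⟩
    · omega
    · have := hranks F hF
      omega
  -- counting characterisations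
  have hcount_indep : ∀ I : Set α, M.Indep I → ∀ c, ((φ '' I) ∩ Set.Icc 1 c).ncard ≤ τ c := by
    intro I hI c
    have hIE : I ⊆ M.E := hI.subset_ground
    refine le_min ?_ (Finset.le_inf' hne𝒞 _ fun F hFm => ?_)
    · refine le_trans (Set.ncard_le_ncard Set.inter_subset_right (Set.finite_Icc _ _)) ?_
      rw [hIccCard]
    · have hF : NTConnFlat M F := (hmem𝒞 F).1 hFm
      have hsplit : (φ '' I) ∩ Set.Icc 1 c ⊆ (φ '' (I ∩ F)) ∪ Set.Icc (F.ncard + 1) c := by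
        rintro t ⟨⟨a, haI, rfl⟩, h1t, htc⟩
        by_cases hle : φ a ≤ F.ncard
        · exact Or.inl ⟨a, ⟨haI, (hφmemF F hF a (hIE haI)).1 hle⟩, rfl⟩
        · exact Or.inr ⟨by omega, htc⟩
      have h1 : (φ '' (I ∩ F)).ncard = (I ∩ F).ncard :=
        Set.ncard_image_of_injOn (hφinj.mono (Set.inter_subset_left.trans hIE))
      have h2 : (I ∩ F).ncard ≤ rk M F :=
        ncard_le_rk hfin (hntcf_subset F hF) Set.inter_subset_right
          (hI.subset Set.inter_subset_left)
      have h3 : (Set.Icc (F.ncard + 1) c).ncard = c - F.ncard := by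
        rw [← Finset.coe_Icc, Set.ncard_coe_finset, Nat.card_Icc]
        omega
      have h4 := Set.ncard_union_le (φ '' (I ∩ F)) (Set.Icc (F.ncard + 1) c)
      have h5 := Set.ncard_le_ncard hsplit
        ((((hfin.subset hIE).inter_of_left F).image φ).union (Set.finite_Icc _ _))
      omega
  have hcount_dep : ∀ I : Set α, I ⊆ M.E → ¬ M.Indep I →
      ∃ F, NTConnFlat M F ∧ τ F.ncard < ((φ '' I) ∩ Set.Icc 1 F.ncard).ncard := by
    intro I hIE hIdep
    obtain ⟨F, hF, hrkF⟩ := exists_ntconnflat hfin hloopless hIE hIdep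
    refine ⟨F, hF, ?_⟩
    have h1 : τ F.ncard ≤ rk M F := by
      have := ht_le_term F.ncard F hF
      omega
    have h2 : φ '' (I ∩ F) ⊆ (φ '' I) ∩ Set.Icc 1 F.ncard := by
      rintro t ⟨a, ⟨haI, haF⟩, rfl⟩
      exact ⟨⟨a, haI, rfl⟩, (hφIcc a (hIE haI)).1, (hφmemF F hF a (hIE haI)).2 haF⟩
    have h3 : (φ '' (I ∩ F)).ncard = (I ∩ F).ncard :=
      Set.ncard_image_of_injOn (hφinj.mono (Set.inter_subset_left.trans hIE))
    have h4 := Set.ncard_le_ncard h2 ((Set.finite_Icc 1 F.ncard).inter_of_right _)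
    omega
  -- the presentation
  have hτsetne : ∀ i : Fin r, (i : ℕ) + 1 ≤ τ n := fun i => by
    rw [hτn]; exact i.isLt
  set l : Fin r → ℕ := fun i => sInf {c | (i : ℕ) + 1 ≤ τ c} with hl
  have hlmem : ∀ i : Fin r, (i : ℕ) + 1 ≤ τ (l i) := fun i =>
    Nat.sInf_mem (⟨n, hτsetne i⟩ : {c | (i : ℕ) + 1 ≤ τ c}.Nonempty)
  have hlmin : ∀ i : Fin r, ∀ c, c < l i → τ c ≤ (i : ℕ) := by
    intro i c hc
    have := Nat.notMem_of_lt_sInf hc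
    simp only [Set.mem_setOf_eq, not_le] at this
    omega
  have hlle : ∀ i : Fin r, l i ≤ n := fun i => Nat.sInf_le (hτsetne i)
  have hl1 : ∀ i : Fin r, 1 ≤ l i := by
    intro i
    by_contra h'
    push_neg at h'
    have h0 : l i = 0 := by omega
    have h1 := hlmem i
    rw [h0] at h1
    have h2 := ht_le_c 0
    omega
  have hlsm : StrictMono l := by
    intro i j hij
    have hij' : (i : ℕ) < (j : ℕ) := hij
    have h1 : 1 ≤ l j := hl1 j
    have h2 : τ (l j - 1) ≥ (i : ℕ) + 1 := by
      have hs := hτstep (l j - 1)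
      have : l j - 1 + 1 = l j := by omega
      rw [this] at hs
      have := hlmem j
      omega
    have h3 : l i ≤ l j - 1 := Nat.sInf_le h2
    omega
  have hlleg : ∀ i : Fin r, l i ≤ m + (i : ℕ) + 1 := by
    intro i
    have hc : m + (i : ℕ) + 1 ≤ n := by
      have := i.isLt
      omega
    have := hτgap (m + (i : ℕ) + 1) hc
    have h2 : (i : ℕ) + 1 ≤ τ (m + (i : ℕ) + 1) := by omega
    exact Nat.sInf_le h2
  set P : LPP m r :=
    { l := l
      g := fun i => m + (i : ℕ) + 1
      l_strictMono := hlsm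
      g_strictMono := fun i j hij => by
        have h' : (i : ℕ) < (j : ℕ) := hij
        show m + (i : ℕ) + 1 < m + (j : ℕ) + 1
        omega
      one_le_l := hl1
      l_le_g := hlleg
      g_le := fun i => by
        have h' := i.isLt
        show m + (i : ℕ) + 1 ≤ m + r
        omega } with hP
  have hg : ∀ i : Fin r, P.g i = m + (i : ℕ) + 1 := fun i => rfl
  -- tauP agrees with τ
  have htauP : ∀ c, c ≤ n → tauP P c = τ c := by
    intro c hc
    have hset : {i : Fin r | P.l i ≤ c} = {i : Fin r | (i : ℕ) < τ c} := by
      ext i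
      simp only [Set.mem_setOf_eq]
      constructor
      · intro h'
        have h'' : l i ≤ c := h'
        have t1 := hτmono (l i) c h''
        have t2 := hlmem i
        omega
      · intro h'
        show l i ≤ c
        have hmemc : c ∈ {c' | (i : ℕ) + 1 ≤ τ c'} := by
          simp only [Set.mem_setOf_eq]
          omega
        exact Nat.sInf_le hmemc
    rw [tauP, hset, ncard_fin_lt]
    have : τ c ≤ r := by
      have := hτmono c n hc
      omega
    omega
  have htauPbig : ∀ c, n ≤ c → tauP P c = r := by
    intro c hc
    have hset : {i : Fin r | P.l i ≤ c} = Set.univ := by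
      ext i
      simp only [Set.mem_setOf_eq, Set.mem_univ, iff_true]
      exact le_trans (hlle i) hc
    rw [tauP, hset, Set.ncard_univ, Nat.card_eq_fintype_card, Fintype.card_fin]
  -- the matroid M₀
  set M₀ : Matroid ℕ := M.map φ hφinj with hM₀
  have hM₀E : M₀.E = Set.Icc 1 (m + r) := by
    rw [hM₀, Matroid.map_ground, himg, hmr]
  have hM₀indep : ∀ J : Set ℕ, M₀.Indep J ↔ J ⊆ Set.Icc 1 (m + r) ∧ IsPT P.N J := by
    intro J
    rw [hM₀, Matroid.map_indep_iff]
    constructor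
    · rintro ⟨I, hI, rfl⟩
      have hsub : φ '' I ⊆ Set.Icc 1 (m + r) := by
        rw [hmr, ← himg]
        exact Set.image_mono hI.subset_ground
      refine ⟨hsub, counting_pt hg hsub fun t => ?_⟩
      rcases le_or_gt t n with htn | htn
      · rw [htauP t htn]
        exact hcount_indep I hI t
      · rw [htauPbig t (le_of_lt htn)]
        have h1 := hcount_indep I hI n
        have h2 : (φ '' I) ∩ Set.Icc 1 t = φ '' I :=
          Set.inter_eq_left.2 (fun x hx => ⟨(hmr ▸ hsub hx).1, le_trans (hmr ▸ hsub hx).2 (le_of_lt htn)⟩)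
        have h3 : (φ '' I) ∩ Set.Icc 1 n = φ '' I :=
          Set.inter_eq_left.2 (fun x hx => hmr ▸ hsub hx)
        rw [h2]
        rw [h3] at h1
        omega
    · rintro ⟨hJsub, hPT⟩
      have hJsub' : J ⊆ φ '' M.E := by rw [himg, ← hmr]; exact hJsub
      obtain ⟨I, hIE, hIJ⟩ := image_repr' hJsub'
      refine ⟨I, ?_, hIJ.symm⟩
      by_contra hIdep
      obtain ⟨F, hF, hlt⟩ := hcount_dep I hIE hIdep
      have hFn : F.ncard ≤ n := Set.ncard_le_ncard (hntcf_subset F hF) hfin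
      have := pt_counting hPT F.ncard
      rw [← hIJ] at this
      rw [htauP F.ncard hFn] at this
      omega
  refine ⟨m, r, P, M₀, hg, ⟨hM₀E, hM₀indep⟩, φ, ?_, fun I hIE => ?_⟩
  · rw [hM₀E, hmr, ← himg]
    exact hφinj.bijOn_image
  · constructor
    · intro h
      rw [hM₀, Matroid.map_indep_iff]
      exact ⟨I, h, rfl⟩
    · intro h
      rw [hM₀, Matroid.map_indep_iff] at h
      obtain ⟨I₀, hI₀, heq⟩ := h
      rwa [(hφinj.image_eq_image_iff hIE hI₀.subset_ground).1 heq]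

end LPM

open LPM in
/-- A connected finite matroid is a generalized Catalan
matroid iff its nontrivial connected flats are linearly ordered by inclusion. -/
theorem stmt17 {α : Type*} (M : Matroid α) (hfin : M.E.Finite)
    (hconn : Connected M) :
    IsGCM M ↔
      ∀ F F' : Set α, NTConnFlat M F → NTConnFlat M F' → F ⊆ F' ∨ F' ⊆ F := by
  constructor
  · rintro ⟨m, r, P, M₀, hg, hP, f, hbij, hind⟩ F F' hF hF'
    have hFE : F ⊆ M.E := hF.1.subset_ground
    have hF'E : F' ⊆ M.E := hF'.1.subset_ground
    have h1 := iso_ntcf_fwd hbij hind hF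
    have h2 := iso_ntcf_fwd hbij hind hF'
    have hpull : ∀ X Y : Set α, X ⊆ M.E → Y ⊆ M.E → f '' X ⊆ f '' Y → X ⊆ Y := by
      intro X Y hX hY himg x hx
      obtain ⟨y, hyY, heq⟩ := himg ⟨x, hx, rfl⟩
      rwa [← hbij.injOn (hY hyY) (hX hx) heq]
    rcases lpm_ntcf_comparable hP hg h1 h2 with h' | h'
    · exact Or.inl (hpull F F' hFE hF'E h')
    · exact Or.inr (hpull F' F hF'E hFE h')
  · exact gcm_of_chain hfin hconn
end
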